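/- arXiv:1612.05612 — 7 statements merged into one kernel-verified Lean document; each statement's English description precedes it below -/
import Mathlib

section
/- Let β ∈ (1/2, 1), A_k = Σ_{i=1}^k i^{-β}, and B_{i,k} = k^{-β} Σ_{j=i}^k 1/A_j for i ≤ k. Then for any fixed N ∈ ℕ, lim_{k→∞} B_{N,k} = (1-β)/β, and sup_{i ≤ k} B_{i,k} is uniformly bounded over all i, k. -/
open Finset Filter

-- c * x^(c-1) ≤ x^c - (x-1)^c  for 1 ≤ x, 0 < c ≤ 1
lemma tele_up {c : ℝ} (hc0 : 0 < c) (hc1 : c ≤ 1) {x : ℝ} (hx : 1 ≤ x) :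
    c * x ^ (c - 1) ≤ x ^ c - (x - 1) ^ c := by
  have hx0 : (0:ℝ) < x := lt_of_lt_of_le one_pos hx
  have hinv : 1/x ≤ 1 := by rw [div_le_one hx0]; exact hx
  have h1 : x - 1 = x * (1 + (-1/x)) := by field_simp; ring
  have h2 : (x - 1) ^ c = x ^ c * (1 + (-1/x)) ^ c := by
    rw [h1, Real.mul_rpow hx0.le (by rw [neg_div]; linarith)]
  have hb : (1 + (-1/x)) ^ c ≤ 1 + c * (-1/x) :=
    rpow_one_add_le_one_add_mul_self (by rw [neg_div]; linarith) hc0.le hc1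
  have hxc : (0:ℝ) ≤ x ^ c := Real.rpow_nonneg hx0.le c
  have h3 : (x - 1) ^ c ≤ x ^ c * (1 + c * (-1/x)) := by
    rw [h2]; exact mul_le_mul_of_nonneg_left hb hxc
  have h4 : x ^ c * (1 + c * (-1/x)) = x ^ c - c * (x ^ c / x) := by ring
  rw [Real.rpow_sub_one hx0.ne'] at *
  nlinarith [h3, h4]

-- (x+1)^c - x^c ≤ c * x^(c-1)  for 1 ≤ x, 0 < c ≤ 1
lemma tele_down {c : ℝ} (hc0 : 0 < c) (hc1 : c ≤ 1) {x : ℝ} (hx : 1 ≤ x) :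
    (x + 1) ^ c - x ^ c ≤ c * x ^ (c - 1) := by
  have hx0 : (0:ℝ) < x := lt_of_lt_of_le one_pos hx
  have h1 : x + 1 = x * (1 + 1/x) := by field_simp
  have h2 : (x + 1) ^ c = x ^ c * (1 + 1/x) ^ c := by
    rw [h1, Real.mul_rpow hx0.le (by positivity)]
  have hb : (1 + 1/x) ^ c ≤ 1 + c * (1/x) :=
    rpow_one_add_le_one_add_mul_self
      (le_trans (by norm_num) (by positivity : (0:ℝ) ≤ 1/x)) hc0.le hc1
  have hxc : (0:ℝ) ≤ x ^ c := Real.rpow_nonneg hx0.le c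
  have h3 : (x + 1) ^ c ≤ x ^ c * (1 + c * (1/x)) := by
    rw [h2]; exact mul_le_mul_of_nonneg_left hb hxc
  have h4 : x ^ c * (1 + c * (1/x)) = x ^ c + c * (x ^ c / x) := by ring
  rw [Real.rpow_sub_one hx0.ne']
  nlinarith [h3, h4]

-- telescoping sum over Icc N k
lemma tele_sum (f : ℝ → ℝ) {N k : ℕ} (hNk : N ≤ k) :
    ∑ j ∈ Icc N k, (f ((j:ℝ) + 1) - f (j:ℝ)) = f ((k:ℝ) + 1) - f (N:ℝ) := by
  rw [← Finset.Ico_add_one_right_eq_Icc, Finset.sum_Ico_eq_sum_range]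
  have h := Finset.sum_range_sub (fun r => f ((N:ℝ) + r)) (k + 1 - N)
  rw [show k + 1 - N = (k + 1 - N) from rfl]
  convert h using 2 with r
  · push_cast; ring_nf
  · push_cast [Nat.cast_sub (by omega : N ≤ k + 1)]; ring_nf
  · simp

lemma sum_pow_le {c : ℝ} (hc0 : 0 < c) (hc1 : c ≤ 1) (k : ℕ) :
    ∑ i ∈ Icc 1 k, (i:ℝ) ^ (c - 1) ≤ (k:ℝ) ^ c / c := by
  rcases Nat.eq_zero_or_pos k with rfl | hk
  · simp [Real.zero_rpow hc0.ne']
  rw [le_div_iff₀ hc0, mul_comm]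
  calc c * ∑ i ∈ Icc 1 k, (i:ℝ) ^ (c - 1)
      = ∑ i ∈ Icc 1 k, c * (i:ℝ) ^ (c - 1) := by rw [mul_sum]
    _ ≤ ∑ i ∈ Icc 1 k, ((i:ℝ) ^ c - ((i:ℝ) - 1) ^ c) := by
        refine sum_le_sum fun i hi => ?_
        have hi1 : 1 ≤ i := (mem_Icc.1 hi).1
        exact tele_up hc0 hc1 (by exact_mod_cast hi1)
    _ = (k:ℝ) ^ c - ((1:ℝ) - 1) ^ c := by
        have := tele_sum (fun x => (x - 1) ^ c) (N := 1) (k := k) hk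
        simpa using this
    _ ≤ (k:ℝ) ^ c := by
        simp [Real.zero_rpow hc0.ne']

lemma le_sum_pow {c : ℝ} (hc0 : 0 < c) (hc1 : c ≤ 1) {N k : ℕ} (hN : 1 ≤ N) (hNk : N ≤ k) :
    ((k:ℝ) ^ c - (N:ℝ) ^ c) / c ≤ ∑ j ∈ Icc N k, (j:ℝ) ^ (c - 1) := by
  rw [div_le_iff₀ hc0, mul_comm]
  calc c * ∑ j ∈ Icc N k, (j:ℝ) ^ (c - 1)
      = ∑ j ∈ Icc N k, c * (j:ℝ) ^ (c - 1) := by rw [mul_sum]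
    _ ≥ ∑ j ∈ Icc N k, (((j:ℝ) + 1) ^ c - (j:ℝ) ^ c) := by
        refine sum_le_sum fun j hj => ?_
        have hj1 : 1 ≤ j := le_trans hN (mem_Icc.1 hj).1
        exact tele_down hc0 hc1 (by exact_mod_cast hj1)
    _ = ((k:ℝ) + 1) ^ c - (N:ℝ) ^ c := tele_sum (fun x => x ^ c) hNk
    _ ≥ (k:ℝ) ^ c - (N:ℝ) ^ c := by
        have : (k:ℝ) ^ c ≤ ((k:ℝ) + 1) ^ c :=
          Real.rpow_le_rpow (by positivity) (by linarith) hc0.le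
        linarith


/-- With `β ∈ (1/2, 1)`, `A k = ∑_{i=1}^k i^(-β)` and `B i k = k^(-β) ∑_{j=i}^k 1/A j`,
for any fixed `N` we have `B N k → (1-β)/β` as `k → ∞`, and the `B i k` (for `i ≤ k`)
are uniformly bounded. -/
theorem stmt_2 (β : ℝ) (hβ₁ : 1/2 < β) (hβ₂ : β < 1)
    (A : ℕ → ℝ) (hA : ∀ k : ℕ, A k = ∑ i ∈ Finset.Icc 1 k, (i : ℝ) ^ (-β))
    (B : ℕ → ℕ → ℝ)
    (hB : ∀ i k : ℕ, B i k = ((k : ℝ) ^ β)⁻¹ * ∑ j ∈ Finset.Icc i k, (A j)⁻¹) :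
    (∀ N : ℕ, 1 ≤ N →
        Filter.Tendsto (fun k => B N k) Filter.atTop (nhds ((1 - β) / β))) ∧
      ∃ M : ℝ, ∀ i k : ℕ, 1 ≤ i → i ≤ k → B i k ≤ M := by
  have hβ0 : 0 < β := by linarith
  set c : ℝ := 1 - β with hc
  have hc0 : 0 < c := by rw [hc]; linarith
  have hc1 : c ≤ 1 := by rw [hc]; linarith
  have hAnn : ∀ j, 0 ≤ A j := fun j => by
    rw [hA]; exact sum_nonneg fun i _ => Real.rpow_nonneg (Nat.cast_nonneg i) _
  have hA1 : ∀ j, 1 ≤ j → 1 ≤ A j := fun j hj => by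
    rw [hA]
    have h1 : (1:ℕ) ∈ Icc 1 j := mem_Icc.2 ⟨le_rfl, hj⟩
    have := Finset.single_le_sum (f := fun i : ℕ => (i:ℝ)^(-β))
      (fun i _ => Real.rpow_nonneg (Nat.cast_nonneg i) _) h1
    simpa using this
  have hApos : ∀ j, 1 ≤ j → 0 < A j := fun j hj => lt_of_lt_of_le one_pos (hA1 j hj)
  have hmb : -β = c - 1 := by rw [hc]; ring
  have hAub : ∀ j : ℕ, A j ≤ (j:ℝ)^c / c := fun j => by
    rw [hA]
    calc ∑ i ∈ Icc 1 j, (i:ℝ)^(-β) = ∑ i ∈ Icc 1 j, (i:ℝ)^(c-1) := by simp_rw [hmb]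
      _ ≤ (j:ℝ)^c / c := sum_pow_le hc0 hc1 j
  have hAlb : ∀ j : ℕ, 1 ≤ j → ((j:ℝ)^c - 1) / c ≤ A j := fun j hj => by
    rw [hA]
    have h := le_sum_pow hc0 hc1 (le_refl 1) hj
    simp only [Nat.cast_one, Real.one_rpow] at h
    calc ((j:ℝ)^c - 1)/c ≤ ∑ i ∈ Icc 1 j, (i:ℝ)^(c-1) := h
      _ = ∑ i ∈ Icc 1 j, (i:ℝ)^(-β) := by simp_rw [hmb]
  have hinvlb : ∀ j : ℕ, 1 ≤ j → c * (j:ℝ)^(β-1) ≤ (A j)⁻¹ := fun j hj => by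
    have hj0 : (0:ℝ) < j := by exact_mod_cast hj
    have hjc : (0:ℝ) < (j:ℝ)^c := Real.rpow_pos_of_pos hj0 c
    have h1 : ((j:ℝ)^c / c)⁻¹ ≤ (A j)⁻¹ := inv_anti₀ (hApos j hj) (hAub j)
    have h2 : ((j:ℝ)^c / c)⁻¹ = c * (j:ℝ)^(β-1) := by
      rw [show β - 1 = -c by rw [hc]; ring, Real.rpow_neg hj0.le]
      field_simp
    linarith [h1]
  have hinvub : ∀ j : ℕ, 1 ≤ j → 2 ≤ (j:ℝ)^c →
      (A j)⁻¹ ≤ c * (j:ℝ)^(β-1) + 2*c*(j:ℝ)^(2*β-1-1) := by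
    intro j hj h2
    set t := (j:ℝ)^c with ht
    have hj0 : (0:ℝ) < j := by exact_mod_cast hj
    have ht0 : (0:ℝ) < t := by linarith
    have ht1 : (0:ℝ) < t - 1 := by linarith
    have h1 : (A j)⁻¹ ≤ ((t - 1)/c)⁻¹ :=
      inv_anti₀ (div_pos ht1 hc0) (hAlb j hj)
    have h1' : ((t - 1)/c)⁻¹ = c/(t-1) := by rw [inv_div]
    have key : c/(t-1) ≤ c/t + 2*c/t^2 := by
      rw [div_add_div _ _ (ne_of_gt ht0) (by positivity),
        div_le_div_iff₀ ht1 (by positivity)]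
      nlinarith [mul_nonneg (mul_nonneg hc0.le ht0.le) (by linarith : (0:ℝ) ≤ t - 2)]
    have e1 : (j:ℝ)^(β-1) = t⁻¹ := by
      rw [show β - 1 = -c by rw [hc]; ring, Real.rpow_neg hj0.le]
    have e2 : (j:ℝ)^(2*β-1-1) = (t^2)⁻¹ := by
      rw [show 2*β-1-1 = -(c*2) by rw [hc]; ring, Real.rpow_neg hj0.le,
        Real.rpow_mul hj0.le, Real.rpow_two]
    rw [e1, e2]
    calc (A j)⁻¹ ≤ c/(t-1) := by rw [← h1']; exact h1
      _ ≤ c/t + 2*c/t^2 := key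
      _ = c * t⁻¹ + 2*c*(t^2)⁻¹ := by rw [div_eq_mul_inv, div_eq_mul_inv]
  -- threshold
  set j0 : ℕ := ⌈(2:ℝ)^(c⁻¹)⌉₊ with hj0def
  have hj0prop : ∀ j : ℕ, j0 < j → 2 ≤ (j:ℝ)^c := fun j hj => by
    have h1 : (2:ℝ)^(c⁻¹) ≤ (j:ℝ) :=
      le_trans (Nat.le_ceil _) (by exact_mod_cast hj.le)
    calc (2:ℝ) = ((2:ℝ)^(c⁻¹))^c := by
          rw [← Real.rpow_mul (by norm_num : (0:ℝ) ≤ 2), inv_mul_cancel₀ hc0.ne',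
            Real.rpow_one]
      _ ≤ (j:ℝ)^c := Real.rpow_le_rpow (Real.rpow_nonneg (by norm_num) _) h1 hc0.le
  have h2βc : 0 < 2*β - 1 := by linarith
  have h2β1 : 2*β - 1 ≤ 1 := by linarith
  have hnat : Tendsto (fun k : ℕ => (k:ℝ)) atTop atTop := tendsto_natCast_atTop_atTop
  have hinv0 : Tendsto (fun k : ℕ => ((k:ℝ)^β)⁻¹) atTop (nhds 0) :=
    ((tendsto_rpow_atTop hβ0).comp hnat).inv_tendsto_atTop
  have hpow0 : Tendsto (fun k : ℕ => (k:ℝ)^(β-1)) atTop (nhds 0) := by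
    have h := (tendsto_rpow_neg_atTop hc0).comp hnat
    have he : (fun k : ℕ => (k:ℝ)^(β-1)) = fun k : ℕ => ((k:ℝ)^(-c)) := by
      funext k; congr 1; rw [hc]; ring
    rw [he]; exact h
  have key : ∀ N : ℕ, 1 ≤ N →
      Filter.Tendsto (fun k => B N k) Filter.atTop (nhds ((1 - β) / β)) := by
    intro N hN
    have hltend : Tendsto (fun k : ℕ => c/β - (c * (N:ℝ)^β / β) * ((k:ℝ)^β)⁻¹)
        atTop (nhds ((1-β)/β)) := by
      have h := (hinv0.const_mul (c * (N:ℝ)^β / β)).const_sub (c/β)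
      have : c/β - c * (N:ℝ)^β / β * 0 = (1-β)/β := by rw [hc]; ring
      rwa [this] at h
    have hutend : Tendsto (fun k : ℕ =>
        (j0:ℝ) * ((k:ℝ)^β)⁻¹ + c/β + (2*c/(2*β-1)) * (k:ℝ)^(β-1))
        atTop (nhds ((1-β)/β)) := by
      have h := ((hinv0.const_mul (j0:ℝ)).add (tendsto_const_nhds (x := c/β))).add
        (hpow0.const_mul (2*c/(2*β-1)))
      have : (j0:ℝ) * 0 + c/β + 2*c/(2*β-1) * 0 = (1-β)/β := by rw [hc]; ring
      rwa [this] at h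
    refine tendsto_of_tendsto_of_tendsto_of_le_of_le' hltend hutend ?_ ?_
    · -- lower bound, eventually
      filter_upwards [eventually_ge_atTop N] with k hk
      have hk1 : 1 ≤ k := le_trans hN hk
      have hk0 : (0:ℝ) < k := by exact_mod_cast hk1
      have hkβ : (0:ℝ) < (k:ℝ)^β := Real.rpow_pos_of_pos hk0 β
      rw [hB]
      have hsum : c * (((k:ℝ)^β - (N:ℝ)^β)/β) ≤ ∑ j ∈ Icc N k, (A j)⁻¹ := by
        calc c * (((k:ℝ)^β - (N:ℝ)^β)/β)
            ≤ c * ∑ j ∈ Icc N k, (j:ℝ)^(β-1) :=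
              mul_le_mul_of_nonneg_left (le_sum_pow hβ0 hβ₂.le hN hk) hc0.le
          _ = ∑ j ∈ Icc N k, c * (j:ℝ)^(β-1) := mul_sum _ _ _
          _ ≤ ∑ j ∈ Icc N k, (A j)⁻¹ :=
              sum_le_sum fun j hj => hinvlb j (le_trans hN (mem_Icc.1 hj).1)
      have halg : c/β - (c * (N:ℝ)^β / β) * ((k:ℝ)^β)⁻¹
          = ((k:ℝ)^β)⁻¹ * (c * (((k:ℝ)^β - (N:ℝ)^β)/β)) := by
        field_simp
      rw [halg]
      exact mul_le_mul_of_nonneg_left hsum (inv_nonneg.2 hkβ.le)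
    · -- upper bound, eventually
      filter_upwards [eventually_ge_atTop (max 1 j0)] with k hk
      have hk1 : 1 ≤ k := le_trans (le_max_left _ _) hk
      have hkj0 : j0 ≤ k := le_trans (le_max_right _ _) hk
      have hk0 : (0:ℝ) < k := by exact_mod_cast hk1
      have hkβ : (0:ℝ) < (k:ℝ)^β := Real.rpow_pos_of_pos hk0 β
      rw [hB]
      have hs1 : ∑ j ∈ Icc N k, (A j)⁻¹ ≤ ∑ j ∈ Icc 1 k, (A j)⁻¹ :=
        sum_le_sum_of_subset_of_nonneg (Icc_subset_Icc hN le_rfl)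
          (fun j _ _ => inv_nonneg.2 (hAnn j))
      have hIccIoc : Finset.Icc 1 k = Finset.Ioc 0 k := by
        ext x; simp [Nat.lt_iff_add_one_le]
      have hsplit : ∑ j ∈ Icc 1 k, (A j)⁻¹
          = ∑ j ∈ Ioc 0 j0, (A j)⁻¹ + ∑ j ∈ Ioc j0 k, (A j)⁻¹ := by
        rw [Finset.sum_Ioc_consecutive _ (Nat.zero_le j0) hkj0, hIccIoc]
      have hpart1 : ∑ j ∈ Ioc 0 j0, (A j)⁻¹ ≤ (j0:ℝ) := by
        calc ∑ j ∈ Ioc 0 j0, (A j)⁻¹ ≤ ∑ _j ∈ Ioc 0 j0, (1:ℝ) := by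
              refine sum_le_sum fun j hj => ?_
              exact inv_le_one_of_one_le₀ (hA1 j (mem_Ioc.1 hj).1)
          _ = (j0:ℝ) := by simp
      have hpart2 : ∑ j ∈ Ioc j0 k, (A j)⁻¹
          ≤ c * ((k:ℝ)^β/β) + 2*c*((k:ℝ)^(2*β-1)/(2*β-1)) := by
        calc ∑ j ∈ Ioc j0 k, (A j)⁻¹
            ≤ ∑ j ∈ Ioc j0 k, (c * (j:ℝ)^(β-1) + 2*c*(j:ℝ)^(2*β-1-1)) := by
              refine sum_le_sum fun j hj => ?_
              have hj1 : j0 < j := (mem_Ioc.1 hj).1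
              exact hinvub j (by omega) (hj0prop j hj1)
          _ = ∑ j ∈ Ioc j0 k, c*(j:ℝ)^(β-1) + ∑ j ∈ Ioc j0 k, 2*c*(j:ℝ)^(2*β-1-1) :=
              sum_add_distrib
          _ ≤ ∑ j ∈ Icc 1 k, c*(j:ℝ)^(β-1) + ∑ j ∈ Icc 1 k, 2*c*(j:ℝ)^(2*β-1-1) := by
              have hsub : Finset.Ioc j0 k ⊆ Finset.Icc 1 k := by
                intro x hx; rw [mem_Icc]; rw [mem_Ioc] at hx; omega
              exact add_le_add
                (sum_le_sum_of_subset_of_nonneg hsub fun j _ _ => by positivity)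
                (sum_le_sum_of_subset_of_nonneg hsub fun j _ _ => by positivity)
          _ ≤ c * ((k:ℝ)^β/β) + 2*c*((k:ℝ)^(2*β-1)/(2*β-1)) := by
              rw [← mul_sum, ← mul_sum]
              exact add_le_add
                (mul_le_mul_of_nonneg_left (sum_pow_le hβ0 hβ₂.le k) hc0.le)
                (mul_le_mul_of_nonneg_left (sum_pow_le h2βc h2β1 k) (by positivity))
      have htot : ∑ j ∈ Icc N k, (A j)⁻¹
          ≤ (j0:ℝ) + (c * ((k:ℝ)^β/β) + 2*c*((k:ℝ)^(2*β-1)/(2*β-1))) := by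
        rw [hsplit] at hs1
        linarith
      have hsplitpow : (k:ℝ)^(2*β-1) = (k:ℝ)^β * (k:ℝ)^(β-1) := by
        rw [← Real.rpow_add hk0]; ring_nf
      calc ((k:ℝ)^β)⁻¹ * ∑ j ∈ Icc N k, (A j)⁻¹
          ≤ ((k:ℝ)^β)⁻¹ * ((j0:ℝ) + (c * ((k:ℝ)^β/β) + 2*c*((k:ℝ)^(2*β-1)/(2*β-1)))) :=
            mul_le_mul_of_nonneg_left htot (inv_nonneg.2 hkβ.le)
        _ = (j0:ℝ) * ((k:ℝ)^β)⁻¹ + c/β + (2*c/(2*β-1)) * (k:ℝ)^(β-1) := by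
            rw [hsplitpow]
            field_simp
            ring
  refine ⟨key, ?_⟩
  obtain ⟨M, hM⟩ := (key 1 le_rfl).bddAbove_range
  refine ⟨M, fun i k hi hik => ?_⟩
  have h1 : B i k ≤ B 1 k := by
    rw [hB, hB]
    refine mul_le_mul_of_nonneg_left ?_
      (inv_nonneg.2 (Real.rpow_nonneg (Nat.cast_nonneg k) β))
    exact sum_le_sum_of_subset_of_nonneg (Icc_subset_Icc hi le_rfl)
      fun j _ _ => inv_nonneg.2 (hAnn j)
  exact le_trans h1 (hM (Set.mem_range_self k))
end

section
/- For any k ∈ ℕ, (1/k) Σ_{j=1}^k (Σ_{i=j+1}^k 1/i)^2 = 2 − (1/k) Σ_{l=1}^k 1/l − (1/k)(Σ_{l=1}^k 1/l)^2. -/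
noncomputable def Hsum (k : ℕ) : ℝ := ∑ l ∈ Finset.Ioc 0 k, (1 : ℝ) / l

lemma Hsum_succ (k : ℕ) : Hsum (k + 1) = Hsum k + 1 / (k + 1 : ℝ) := by
  unfold Hsum
  rw [Finset.sum_Ioc_succ_top (Nat.zero_le _)]
  push_cast
  ring

lemma sum_Hsum (k : ℕ) :
    ∑ j ∈ Finset.Ioc 0 k, Hsum j = (k + 1 : ℝ) * Hsum k - k := by
  induction k with
  | zero => simp [Hsum]
  | succ k ih =>
    rw [Finset.sum_Ioc_succ_top (Nat.zero_le _), ih, Hsum_succ]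
    have h : (k : ℝ) + 1 ≠ 0 := by positivity
    push_cast
    field_simp
    ring

lemma main_ident (k : ℕ) :
    ∑ j ∈ Finset.Ioc 0 k, (Hsum k - Hsum j) ^ 2
      = 2 * k - Hsum k - Hsum k ^ 2 := by
  induction k with
  | zero => simp [Hsum]
  | succ k ih =>
    rw [Finset.sum_Ioc_succ_top (Nat.zero_le _)]
    have expand : ∀ j ∈ Finset.Ioc 0 k,
        (Hsum (k + 1) - Hsum j) ^ 2
          = (Hsum k - Hsum j) ^ 2 + (2 / (k + 1 : ℝ)) * (Hsum k - Hsum j)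
            + (1 / (k + 1 : ℝ)) ^ 2 := by
      intro j _
      rw [Hsum_succ]
      have h : (k : ℝ) + 1 ≠ 0 := by positivity
      field_simp
      ring
    rw [Finset.sum_congr rfl expand]
    rw [Finset.sum_add_distrib, Finset.sum_add_distrib, ← Finset.mul_sum,
      Finset.sum_sub_distrib, Finset.sum_const, Finset.sum_const,
      Nat.card_Ioc, Nat.sub_zero, sum_Hsum, ih, Hsum_succ]
    have h : (k : ℝ) + 1 ≠ 0 := by positivity
    push_cast
    simp only [nsmul_eq_mul]
    field_simp
    ring

/-- For `k ≥ 1`,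
`(1/k) ∑_{j=1}^k (∑_{i=j+1}^k 1/i)² = 2 − (1/k) ∑_{l=1}^k 1/l − (1/k)(∑_{l=1}^k 1/l)²`. -/
theorem stmt_4 (k : ℕ) (hk : 1 ≤ k) :
    (1 / (k : ℝ)) * ∑ j ∈ Finset.Icc 1 k, (∑ i ∈ Finset.Icc (j + 1) k, (1 : ℝ) / i) ^ 2
      = 2 - (1 / (k : ℝ)) * ∑ l ∈ Finset.Icc 1 k, (1 : ℝ) / l
        - (1 / (k : ℝ)) * (∑ l ∈ Finset.Icc 1 k, (1 : ℝ) / l) ^ 2 := by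
  have hIcc : Finset.Icc 1 k = Finset.Ioc 0 k := rfl
  have hH : ∑ l ∈ Finset.Icc 1 k, (1 : ℝ) / l = Hsum k := by rw [hIcc]; rfl
  have hinner : ∀ j ∈ Finset.Icc 1 k,
      (∑ i ∈ Finset.Icc (j + 1) k, (1 : ℝ) / i) ^ 2 = (Hsum k - Hsum j) ^ 2 := by
    intro j hj
    rw [Finset.mem_Icc] at hj
    have hsplit : ∑ i ∈ Finset.Ioc 0 j, (1 : ℝ) / i
        + ∑ i ∈ Finset.Ioc j k, (1 : ℝ) / i = ∑ i ∈ Finset.Ioc 0 k, (1 : ℝ) / i :=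
      Finset.sum_Ioc_consecutive _ (Nat.zero_le _) hj.2
    have : Finset.Icc (j + 1) k = Finset.Ioc j k := Finset.Icc_add_one_left_eq_Ioc j k
    rw [this]
    have : ∑ i ∈ Finset.Ioc j k, (1 : ℝ) / i = Hsum k - Hsum j := by
      unfold Hsum; linarith
    rw [this]
  rw [Finset.sum_congr rfl hinner, hH, hIcc, main_ident]
  have hk0 : (k : ℝ) ≠ 0 := by positivity
  field_simp
end

section
/- Let A ∈ ℝ^{m×n} with columns a_1, …, a_m, and suppose x = A^T λ for some strictly positive λ ∈ ℝ^m. Then for any index i_0 ∈ [m], either (i) there exists T ⊆ [m] such that {a_{i_0}} ∪ {a_i}_{i∈T} is linearly independent and x = λ_0 a_{i_0} + Σ_{i∈T} λ_i a_i with λ_0 > 0 and λ_i > 0 for i ∈ T, or (ii) there exist T ⊆ [m] and λ_i ≥ 0 such that a_{i_0} + Σ_{i∈T} λ_i a_i = 0. -/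
open Finset

private lemma reduce_step (m n : ℕ) (a : Fin m → Fin n → ℝ) (x : Fin n → ℝ) (i₀ : Fin m)
    (T : Finset (Fin m)) (lam₀ : ℝ) (μ c : Fin m → ℝ)
    (hlam₀ : 0 < lam₀) (hμ : ∀ i ∈ T, 0 < μ i)
    (hx : x = lam₀ • a i₀ + ∑ i ∈ T, μ i • a i)
    (hc0 : c i₀ ≤ 0) (hpos : ∃ i ∈ T, 0 < c i)
    (hrel : c i₀ • a i₀ + ∑ i ∈ T, c i • a i = 0) :
    ∃ T' : Finset (Fin m), T'.card < T.card ∧ T' ⊆ T ∧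
      ∃ (lam₀' : ℝ) (μ' : Fin m → ℝ), 0 < lam₀' ∧ (∀ i ∈ T', 0 < μ' i) ∧
        x = lam₀' • a i₀ + ∑ i ∈ T', μ' i • a i := by
  classical
  obtain ⟨i₂, hi₂T, hi₂c⟩ := hpos
  set S : Finset (Fin m) := T.filter (fun i => 0 < c i) with hS
  have hSne : S.Nonempty := ⟨i₂, by simp [hS, hi₂T, hi₂c]⟩
  set t : ℝ := S.inf' hSne (fun i => μ i / c i) with ht
  obtain ⟨j, hjS, hjt⟩ := S.exists_mem_eq_inf' hSne (fun i => μ i / c i)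
  have hjT : j ∈ T := (mem_filter.1 hjS).1
  have hcj : 0 < c j := (mem_filter.1 hjS).2
  have htpos : 0 < t := by rw [ht, hjt]; exact div_pos (hμ j hjT) hcj
  set μ' : Fin m → ℝ := fun i => μ i - t * c i with hμ'
  set lam₀' : ℝ := lam₀ - t * c i₀ with hlam₀'def
  have hlam₀' : 0 < lam₀' := by
    have : t * c i₀ ≤ 0 := mul_nonpos_of_nonneg_of_nonpos htpos.le hc0
    simp only [hlam₀'def]; linarith
  have hμ'nonneg : ∀ i ∈ T, 0 ≤ μ' i := by
    intro i hiT
    by_cases hci : 0 < c i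
    · have hiS : i ∈ S := mem_filter.2 ⟨hiT, hci⟩
      have : t ≤ μ i / c i := inf'_le _ hiS
      have := (le_div_iff₀ hci).1 this
      simp only [hμ']; linarith
    · push_neg at hci
      have : t * c i ≤ 0 := mul_nonpos_of_nonneg_of_nonpos htpos.le hci
      have := hμ i hiT
      simp only [hμ']; linarith
  have hμ'j : μ' j = 0 := by
    simp only [hμ', ht, hjt]
    field_simp
    ring
  set T' : Finset (Fin m) := T.filter (fun i => μ' i ≠ 0) with hT'
  have hT'sub : T' ⊆ T := filter_subset _ _
  have hjT' : j ∉ T' := by simp [hT', hμ'j]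
  have hcard : T'.card < T.card :=
    card_lt_card ((Finset.ssubset_iff_of_subset hT'sub).2 ⟨j, hjT, hjT'⟩)
  refine ⟨T', hcard, hT'sub, lam₀', μ', hlam₀', ?_, ?_⟩
  · intro i hiT'
    have := hμ'nonneg i (hT'sub hiT')
    have hne : μ' i ≠ 0 := (mem_filter.1 hiT').2
    exact lt_of_le_of_ne this (Ne.symm hne)
  · have hsum : ∑ i ∈ T', μ' i • a i = ∑ i ∈ T, μ' i • a i := by
      refine (Finset.sum_subset hT'sub ?_)
      intro i hiT hiT'
      have : μ' i = 0 := by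
        by_contra h
        exact hiT' (mem_filter.2 ⟨hiT, h⟩)
      simp [this]
    rw [hsum]
    have key : lam₀' • a i₀ + ∑ i ∈ T, μ' i • a i
        = (lam₀ • a i₀ + ∑ i ∈ T, μ i • a i) - t • (c i₀ • a i₀ + ∑ i ∈ T, c i • a i) := by
      simp only [hμ', hlam₀'def, sub_smul, smul_smul, smul_add, Finset.smul_sum,
        Finset.sum_sub_distrib]
      abel
    rw [key, hrel, ← hx]
    simp

private lemma main_ind (m n : ℕ) (a : Fin m → Fin n → ℝ) (x : Fin n → ℝ) (i₀ : Fin m) :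
    ∀ k : ℕ, ∀ T : Finset (Fin m), T.card < k → i₀ ∉ T →
    ∀ (lam₀ : ℝ) (μ : Fin m → ℝ), 0 < lam₀ → (∀ i ∈ T, 0 < μ i) →
    x = lam₀ • a i₀ + ∑ i ∈ T, μ i • a i →
    (∃ T : Finset (Fin m), i₀ ∉ T ∧
        LinearIndependent ℝ (fun i : ↥(insert i₀ T) => a i) ∧
        ∃ (lam₀ : ℝ) (μ : Fin m → ℝ), 0 < lam₀ ∧ (∀ i ∈ T, 0 < μ i) ∧
          x = lam₀ • a i₀ + ∑ i ∈ T, μ i • a i) ∨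
      (∃ (T : Finset (Fin m)) (μ : Fin m → ℝ), (∀ i ∈ T, 0 ≤ μ i) ∧
        a i₀ + ∑ i ∈ T, μ i • a i = 0) := by
  classical
  intro k
  induction k with
  | zero => intro T h; omega
  | succ k ih =>
    intro T hTk hi₀ lam₀ μ hlam₀ hμ hx
    by_cases hind : LinearIndependent ℝ (fun i : ↥(insert i₀ T) => a i)
    · exact Or.inl ⟨T, hi₀, hind, lam₀, μ, hlam₀, hμ, hx⟩
    rw [Fintype.not_linearIndependent_iff] at hind
    obtain ⟨g, hg0, i₁, hgi₁⟩ := hind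
    set d : Fin m → ℝ := fun i => if h : i ∈ insert i₀ T then g ⟨i, h⟩ else 0 with hd
    have hdg : ∀ i : ↥(insert i₀ T), d ↑i = g i := fun i => dif_pos i.2
    have hdsum : ∑ i ∈ insert i₀ T, d i • a i = 0 := by
      rw [← Finset.sum_coe_sort]
      simp only [hdg]
      exact hg0
    have hrel : d i₀ • a i₀ + ∑ i ∈ T, d i • a i = 0 := by
      rwa [Finset.sum_insert hi₀] at hdsum
    have hdi₁ : d ↑i₁ ≠ 0 := by rw [hdg]; exact hgi₁
    -- helper to conclude from reduce_step
    have conclude : ∀ c : Fin m → ℝ, c i₀ ≤ 0 → (∃ i ∈ T, 0 < c i) →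
        (c i₀ • a i₀ + ∑ i ∈ T, c i • a i = 0) →
        ((∃ T : Finset (Fin m), i₀ ∉ T ∧
            LinearIndependent ℝ (fun i : ↥(insert i₀ T) => a i) ∧
            ∃ (lam₀ : ℝ) (μ : Fin m → ℝ), 0 < lam₀ ∧ (∀ i ∈ T, 0 < μ i) ∧
              x = lam₀ • a i₀ + ∑ i ∈ T, μ i • a i) ∨
          (∃ (T : Finset (Fin m)) (μ : Fin m → ℝ), (∀ i ∈ T, 0 ≤ μ i) ∧
            a i₀ + ∑ i ∈ T, μ i • a i = 0)) := by
      intro c hc0 hpos hcrel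
      obtain ⟨T', hcard, hsub, lam₀', μ', h1, h2, h3⟩ :=
        reduce_step m n a x i₀ T lam₀ μ c hlam₀ hμ hx hc0 hpos hcrel
      exact ih T' (by omega) (fun h => hi₀ (hsub h)) lam₀' μ' h1 h2 h3
    by_cases hT0 : ∀ i ∈ T, d i = 0
    · -- a i₀ = 0
      have hdi₀ : d i₀ ≠ 0 := by
        rcases Finset.mem_insert.1 i₁.2 with h | h
        · rwa [← h]
        · exact absurd (hT0 _ h) hdi₁
      have ha0 : a i₀ = 0 := by
        have : d i₀ • a i₀ = 0 := by
          have : ∑ i ∈ T, d i • a i = 0 := by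
            apply Finset.sum_eq_zero; intro i hi; simp [hT0 i hi]
          rw [this, add_zero] at hrel; exact hrel
        exact (smul_eq_zero.1 this).resolve_left hdi₀
      exact Or.inr ⟨∅, 0, by simp, by simp [ha0]⟩
    push_neg at hT0
    obtain ⟨i₂, hi₂T, hi₂d⟩ := hT0
    rcases lt_trichotomy (d i₀) 0 with hd₀ | hd₀ | hd₀
    · -- d i₀ < 0 : use c = d if ∃ pos, else case (ii)
      by_cases hpos : ∃ i ∈ T, 0 < d i
      · exact conclude d hd₀.le hpos hrel
      · push_neg at hpos
        refine Or.inr ⟨T, fun i => d i / d i₀, ?_, ?_⟩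
        · intro i hi
          rw [div_nonneg_iff]
          exact Or.inr ⟨hpos i hi, hd₀.le⟩
        · have : a i₀ + ∑ i ∈ T, (d i / d i₀) • a i
              = (d i₀)⁻¹ • (d i₀ • a i₀ + ∑ i ∈ T, d i • a i) := by
            rw [smul_add, smul_smul, inv_mul_cancel₀ hd₀.ne, one_smul, Finset.smul_sum]
            congr 1
            apply Finset.sum_congr rfl
            intro i _
            rw [smul_smul, div_eq_inv_mul]
          rw [this, hrel, smul_zero]
    · -- d i₀ = 0
      rcases lt_or_gt_of_ne hi₂d with hneg | hposd
      · -- use c = -d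
        refine conclude (fun i => -d i) (by simp [hd₀]) ⟨i₂, hi₂T, by show 0 < -d i₂; linarith⟩ ?_
        have : (fun i => -d i) i₀ • a i₀ + ∑ i ∈ T, (fun i => -d i) i • a i
            = -(d i₀ • a i₀ + ∑ i ∈ T, d i • a i) := by
          simp [neg_smul, Finset.sum_neg_distrib]
          abel
        rw [this, hrel, neg_zero]
      · exact conclude d hd₀.le ⟨i₂, hi₂T, hposd⟩ hrel
    · -- d i₀ > 0 : use c = -d if ∃ pos for -d, else case (ii) with -d
      by_cases hpos : ∃ i ∈ T, d i < 0
      · obtain ⟨i₃, hi₃T, hi₃⟩ := hpos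
        refine conclude (fun i => -d i) (by simp; linarith) ⟨i₃, hi₃T, by show 0 < -d i₃; linarith⟩ ?_
        have : (fun i => -d i) i₀ • a i₀ + ∑ i ∈ T, (fun i => -d i) i • a i
            = -(d i₀ • a i₀ + ∑ i ∈ T, d i • a i) := by
          simp [neg_smul, Finset.sum_neg_distrib]
          abel
        rw [this, hrel, neg_zero]
      · push_neg at hpos
        refine Or.inr ⟨T, fun i => d i / d i₀, ?_, ?_⟩
        · intro i hi
          exact div_nonneg (hpos i hi) hd₀.le
        · have : a i₀ + ∑ i ∈ T, (d i / d i₀) • a i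
              = (d i₀)⁻¹ • (d i₀ • a i₀ + ∑ i ∈ T, d i • a i) := by
            rw [smul_add, smul_smul, inv_mul_cancel₀ hd₀.ne', one_smul, Finset.smul_sum]
            congr 1
            apply Finset.sum_congr rfl
            intro i _
            rw [smul_smul, div_eq_inv_mul]
          rw [this, hrel, smul_zero]

/-- Carathéodory-type result for conic combinations: if `x = ∑ i, λ i • a i` with
`λ > 0`, then for any index `i₀` either (i) `x` is a positive combination of `a i₀`
and a linearly independent subfamily (together with `a i₀`), or (ii) `a i₀` plus a
nonnegative combination of some of the `a i` vanishes. -/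
theorem stmt_6 (m n : ℕ) (a : Fin m → Fin n → ℝ) (x : Fin n → ℝ)
    (lam : Fin m → ℝ) (hlam : ∀ i, 0 < lam i) (hx : x = ∑ i, lam i • a i)
    (i₀ : Fin m) :
    (∃ T : Finset (Fin m), i₀ ∉ T ∧
        LinearIndependent ℝ (fun i : ↥(insert i₀ T) => a i) ∧
        ∃ (lam₀ : ℝ) (μ : Fin m → ℝ), 0 < lam₀ ∧ (∀ i ∈ T, 0 < μ i) ∧
          x = lam₀ • a i₀ + ∑ i ∈ T, μ i • a i) ∨
      (∃ (T : Finset (Fin m)) (μ : Fin m → ℝ), (∀ i ∈ T, 0 ≤ μ i) ∧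
        a i₀ + ∑ i ∈ T, μ i • a i = 0) := by
  classical
  set T := (Finset.univ : Finset (Fin m)).erase i₀ with hT
  have hxT : x = lam i₀ • a i₀ + ∑ i ∈ T, lam i • a i := by
    rw [hx, ← Finset.add_sum_erase _ _ (Finset.mem_univ i₀)]
  exact main_ind m n a x i₀ (T.card + 1) T (by omega) (Finset.notMem_erase _ _)
    (lam i₀) lam (hlam i₀) (fun i _ => hlam i) hxT
end

section
/- Let c > 0 and κ, ρ ∈ (0,1) with κ = ρ. Then lim_{a→∞} (1/a) ∫_a^∞ (t^ρ − a^ρ) exp(−c(t^κ − a^κ)) dt = 0. -/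
open MeasureTheory Real Filter Set Topology

lemma aux_int {b ρ : ℝ} (hb : 0 < b) (hρ0 : 0 < ρ) :
    IntegrableOn (fun s : ℝ => Real.exp (-b * s ^ ρ)) (Set.Ioi 1) := by
  have h1 : IntegrableOn (fun y : ℝ => y ^ (ρ⁻¹ - 1) * Real.exp (-b * y)) (Ioi 0) := by
    have := integrableOn_rpow_mul_exp_neg_mul_rpow (p := 1) (s := ρ⁻¹ - 1) (b := b)
      (by have := inv_pos.mpr hρ0; linarith) zero_lt_one hb
    simpa [Real.rpow_one] using this
  have h2 := (integrableOn_Ioi_comp_rpow_iff'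
      (fun y : ℝ => y ^ (ρ⁻¹ - 1) * Real.exp (-b * y)) (p := ρ) hρ0.ne').mpr h1
  have h3 : IntegrableOn (fun s : ℝ => Real.exp (-b * s ^ ρ)) (Ioi 0) := by
    refine h2.congr_fun (fun x hx => ?_) measurableSet_Ioi
    have hx0 : (0:ℝ) < x := hx
    have hxρ : (0:ℝ) < x ^ ρ := rpow_pos_of_pos hx0 ρ
    beta_reduce
    rw [smul_eq_mul, ← Real.rpow_mul hx0.le, ← mul_assoc, ← Real.rpow_add hx0,
      show ρ - 1 + ρ * (ρ⁻¹ - 1) = 0 by field_simp; ring, Real.rpow_zero, one_mul]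
  exact h3.mono_set (Set.Ioi_subset_Ioi zero_le_one)

lemma aux_key {c y : ℝ} (hc : 0 < c) (hy : 0 ≤ y) :
    y * Real.exp (-c * y) ≤ (2 / c) * Real.exp (-(c / 2) * y) := by
  have h1 : c * y / 2 ≤ Real.exp (c * y / 2) := by
    have := Real.add_one_le_exp (c * y / 2); linarith
  have h2 : y ≤ (2 / c) * Real.exp (c * y / 2) := by
    rw [div_mul_eq_mul_div, le_div_iff₀ hc]
    linarith
  calc y * Real.exp (-c * y) ≤ ((2 / c) * Real.exp (c * y / 2)) * Real.exp (-c * y) :=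
        mul_le_mul_of_nonneg_right h2 (Real.exp_pos _).le
    _ = (2 / c) * Real.exp (-(c / 2) * y) := by
        rw [mul_assoc, ← Real.exp_add]; ring_nf

lemma aux_main {c ρ : ℝ} (hc : 0 < c) (hρ0 : 0 < ρ) :
    Filter.Tendsto
      (fun a : ℝ => ∫ x in Set.Ioi (1:ℝ),
        (a ^ ρ * (x ^ ρ - 1)) * Real.exp (-c * (a ^ ρ * (x ^ ρ - 1))))
      Filter.atTop (nhds 0) := by
  have := MeasureTheory.tendsto_integral_filter_of_dominated_convergence
    (μ := volume.restrict (Ioi (1:ℝ))) (l := atTop)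
    (F := fun (a : ℝ) (x : ℝ) => (a ^ ρ * (x ^ ρ - 1)) * Real.exp (-c * (a ^ ρ * (x ^ ρ - 1))))
    (f := fun _ => (0:ℝ))
    (bound := fun x => (2 / c * Real.exp (c / 2)) * Real.exp (-(c / 2) * x ^ ρ))
    ?_ ?_ ?_ ?_
  · simpa using this
  · refine Eventually.of_forall fun a => ?_
    apply Continuous.aestronglyMeasurable
    have hρ0' : (0:ℝ) ≤ ρ := hρ0.le
    fun_prop (disch := assumption)
  · filter_upwards [eventually_ge_atTop (1:ℝ)] with a ha
    filter_upwards [ae_restrict_mem measurableSet_Ioi] with x hx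
    have hx1 : (1:ℝ) < x := hx
    have hxρ : (1:ℝ) ≤ x ^ ρ := Real.one_le_rpow hx1.le hρ0.le
    have haρ : (1:ℝ) ≤ a ^ ρ := Real.one_le_rpow ha hρ0.le
    have hy0 : 0 ≤ a ^ ρ * (x ^ ρ - 1) := mul_nonneg (by linarith) (by linarith)
    have hyx : x ^ ρ - 1 ≤ a ^ ρ * (x ^ ρ - 1) := le_mul_of_one_le_left (by linarith) haρ
    rw [Real.norm_eq_abs, abs_of_nonneg (mul_nonneg hy0 (Real.exp_pos _).le)]
    calc a ^ ρ * (x ^ ρ - 1) * Real.exp (-c * (a ^ ρ * (x ^ ρ - 1)))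
        ≤ (2 / c) * Real.exp (-(c / 2) * (a ^ ρ * (x ^ ρ - 1))) := aux_key hc hy0
      _ ≤ (2 / c) * Real.exp (-(c / 2) * (x ^ ρ - 1)) := by
          apply mul_le_mul_of_nonneg_left _ (by positivity)
          apply Real.exp_le_exp.mpr
          nlinarith
      _ = (2 / c * Real.exp (c / 2)) * Real.exp (-(c / 2) * x ^ ρ) := by
          rw [mul_assoc, ← Real.exp_add]; ring_nf
  · exact (aux_int (half_pos hc) hρ0).const_mul _
  · filter_upwards [ae_restrict_mem measurableSet_Ioi] with x hx
    have hx1 : (1:ℝ) < x := hx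
    have hk : (0:ℝ) < x ^ ρ - 1 := by
      have := (Real.one_lt_rpow_iff_of_pos (by linarith : (0:ℝ) < x)).mpr (Or.inl ⟨hx1, hρ0⟩)
      linarith
    have h1 : Tendsto (fun a : ℝ => a ^ ρ * (x ^ ρ - 1)) atTop atTop :=
      (tendsto_rpow_atTop hρ0).atTop_mul_const hk
    have h2 : Tendsto (fun y : ℝ => y * Real.exp (-c * y)) atTop (𝓝 0) := by
      have := tendsto_rpow_mul_exp_neg_mul_atTop_nhds_zero 1 c hc
      refine this.congr' ?_
      filter_upwards [eventually_ge_atTop (0:ℝ)] with t _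
      rw [Real.rpow_one]
    exact h2.comp h1

/-- For `c > 0` and `κ = ρ ∈ (0,1)`,
`(1/a) ∫_a^∞ (t^ρ − a^ρ) exp(−c(t^κ − a^κ)) dt → 0` as `a → ∞`. -/
theorem stmt_8 (c κ ρ : ℝ) (hc : 0 < c) (hκ : κ ∈ Set.Ioo (0:ℝ) 1)
    (hρ : ρ ∈ Set.Ioo (0:ℝ) 1) (hκρ : κ = ρ) :
    Filter.Tendsto
      (fun a : ℝ =>
        a⁻¹ * ∫ t in Set.Ioi a, (t ^ ρ - a ^ ρ) * Real.exp (-c * (t ^ κ - a ^ κ)))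
      Filter.atTop (nhds 0) := by
  rw [hκρ]
  obtain ⟨hρ0, hρ1⟩ := hρ
  refine (aux_main hc hρ0).congr' ?_
  filter_upwards [eventually_gt_atTop (0:ℝ)] with a ha
  have step1 : (∫ x in Ioi (1:ℝ), (fun t => (t ^ ρ - a ^ ρ) *
      Real.exp (-c * (t ^ ρ - a ^ ρ))) (a * x)) =
      a⁻¹ • ∫ t in Ioi (a * 1), (t ^ ρ - a ^ ρ) * Real.exp (-c * (t ^ ρ - a ^ ρ)) :=
    integral_comp_mul_left_Ioi (fun t => (t ^ ρ - a ^ ρ) * Real.exp (-c * (t ^ ρ - a ^ ρ))) 1 ha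
  rw [mul_one, smul_eq_mul] at step1
  rw [← step1]
  refine setIntegral_congr_fun measurableSet_Ioi fun x hx => ?_
  have hx1 : (1:ℝ) < x := hx
  simp only
  rw [Real.mul_rpow ha.le (by linarith : (0:ℝ) ≤ x)]
  ring_nf
end

section
/- Let c > 0, κ, ρ ∈ (0,1), and b ≥ a > 0. Then ∫_a^b (t^ρ − a^ρ) exp(−c(t^κ − a^κ)) dt ≤ C(c,κ,ρ) [Γ((1+ρ)/κ) + a^{1+ρ−κ}] for some constant C(c,κ,ρ) < ∞ depending only on c, κ, ρ. -/
open Real Set MeasureTheory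

lemma aux_add_rpow_le {x y p : ℝ} (hx : 0 ≤ x) (hy : 0 ≤ y) (hp : 0 ≤ p) (hp1 : p ≤ 1) :
    (x + y) ^ p ≤ x ^ p + y ^ p := by
  have h := NNReal.rpow_add_le_add_rpow x.toNNReal y.toNNReal hp hp1
  rw [← Real.coe_toNNReal x hx, ← Real.coe_toNNReal y hy]
  exact_mod_cast h

lemma aux_integrableOn1 {s b : ℝ} (hs : -1 < s) (hb : 0 < b) :
    IntegrableOn (fun x : ℝ => x ^ s * Real.exp (-b * x)) (Set.Ioi 0) := by
  have h := integrableOn_rpow_mul_exp_neg_mul_rpow (s := s) (p := 1) (b := b) hs one_pos hb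
  simpa [Real.rpow_one] using h

lemma aux_integrableOn {p s b : ℝ} (hp : 0 < p) (hs : -1 < s) (hb : 0 < b) :
    IntegrableOn (fun x : ℝ => x ^ s * Real.exp (-b * x ^ p)) (Set.Ioi 0) := by
  have hq : -1 < (s + 1) / p - 1 := by
    have : 0 < (s + 1) / p := div_pos (by linarith) hp
    linarith
  have base : IntegrableOn (fun y : ℝ => y ^ ((s + 1) / p - 1) * Real.exp (-b * y))
      (Set.Ioi 0) := aux_integrableOn1 hq hb
  have h2 := (integrableOn_Ioi_comp_rpow_iff'
    (fun y : ℝ => y ^ ((s + 1) / p - 1) * Real.exp (-b * y)) (ne_of_gt hp)).mpr base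
  refine h2.congr_fun (fun x hx => ?_) measurableSet_Ioi
  have hx' : (0:ℝ) < x := hx
  beta_reduce
  rw [smul_eq_mul, ← mul_assoc]
  congr 1
  rw [← Real.rpow_mul hx'.le, ← Real.rpow_add hx']
  congr 1
  field_simp
  ring

lemma aux_chord {κ : ℝ} (hκ0 : 0 < κ) (hκ1 : κ < 1) {a t : ℝ} (ha : 0 < a)
    (h1 : a ≤ t) (h2 : t ≤ 2 * a) :
    (2 ^ κ - 1) * a ^ (κ - 1) * (t - a) ≤ t ^ κ - a ^ κ := by
  have hconc := Real.concaveOn_rpow hκ0.le hκ1.le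
  have hμ : 0 ≤ (2 * a - t) / a := div_nonneg (by linarith) ha.le
  have hν : 0 ≤ (t - a) / a := div_nonneg (by linarith) ha.le
  have hμν : (2 * a - t) / a + (t - a) / a = 1 := by field_simp; ring
  have hkey := hconc.2 (Set.mem_Ici.mpr ha.le) (Set.mem_Ici.mpr (by linarith : (0:ℝ) ≤ 2 * a))
    hμ hν hμν
  have harg : (2 * a - t) / a * a + (t - a) / a * (2 * a) = t := by field_simp; ring
  simp only [smul_eq_mul] at hkey
  rw [harg] at hkey
  have h2κ : (2 * a) ^ κ = 2 ^ κ * a ^ κ := Real.mul_rpow (by norm_num) ha.le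
  have haκ : a ^ (κ - 1) * a = a ^ κ := by
    rw [← Real.rpow_add_one ha.ne' (κ - 1), sub_add_cancel]
  have hμa : (2 * a - t) / a = 1 - (t - a) / a := by field_simp; ring
  rw [h2κ, hμa] at hkey
  have expand : (2 ^ κ - 1) * a ^ (κ - 1) * (t - a)
      = (t - a) / a * (2 ^ κ * a ^ κ) - (t - a) / a * a ^ κ := by
    have e1 : (t - a) / a * a ^ κ = (t - a) * a ^ (κ - 1) := by
      rw [← haκ]; field_simp
    rw [e1]
    have e2 : (t - a) / a * (2 ^ κ * a ^ κ) = (t - a) * (2 ^ κ * a ^ (κ - 1)) := by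
      rw [← haκ]; field_simp
    rw [e2]; ring
  rw [expand]
  nlinarith [hkey]

set_option maxHeartbeats 1000000

/-- For `c > 0`, `κ, ρ ∈ (0,1)` and `b ≥ a > 0`,
`∫_a^b (t^ρ − a^ρ) exp(−c(t^κ − a^κ)) dt ≤ C(c,κ,ρ) [Γ((1+ρ)/κ) + a^{1+ρ−κ}]`
for a constant `C` depending only on `c, κ, ρ`. -/
theorem stmt_9 (c κ ρ : ℝ) (hc : 0 < c) (hκ : κ ∈ Set.Ioo (0:ℝ) 1)
    (hρ : ρ ∈ Set.Ioo (0:ℝ) 1) :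
    ∃ C : ℝ, 0 < C ∧ ∀ a b : ℝ, 0 < a → a ≤ b →
      (∫ t in a..b, (t ^ ρ - a ^ ρ) * Real.exp (-c * (t ^ κ - a ^ κ)))
        ≤ C * (Real.Gamma ((1 + ρ) / κ) + a ^ (1 + ρ - κ)) := by
  obtain ⟨hκ0, hκ1⟩ := hκ
  obtain ⟨hρ0, hρ1⟩ := hρ
  have h2κ1 : 1 < (2:ℝ) ^ κ :=
    (Real.one_lt_rpow_iff_of_pos (by norm_num)).mpr (Or.inl ⟨one_lt_two, hκ0⟩)
  have hd : 0 < c * (2 ^ κ - 1) := by nlinarith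
  have h2neg : (2:ℝ) ^ (-κ) < 1 :=
    Real.rpow_lt_one_of_one_lt_of_neg one_lt_two (by linarith)
  have h2negpos : (0:ℝ) < (2:ℝ) ^ (-κ) := Real.rpow_pos_of_pos (by norm_num) _
  have hc2 : 0 < c * (1 - 2 ^ (-κ)) := by nlinarith
  have hΓ₀ : 0 < Real.Gamma ((ρ + 1) / κ) := Real.Gamma_pos_of_pos (by positivity)
  have hΓ₁ : 0 < Real.Gamma (ρ + 1) := Real.Gamma_pos_of_pos (by positivity)
  set Γ₀ := Real.Gamma ((ρ + 1) / κ) with hΓ₀def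
  set K := (c * (2 ^ κ - 1)) ^ (-(ρ + 1)) * Real.Gamma (ρ + 1) with hKdef
  set B := (c * (1 - 2 ^ (-κ))) ^ (-(ρ + 1) / κ) * (1 / κ) with hBdef
  have hK : 0 < K := mul_pos (Real.rpow_pos_of_pos hd _) hΓ₁
  have hB : 0 < B := mul_pos (Real.rpow_pos_of_pos hc2 _) (by positivity)
  refine ⟨K * (1 / Γ₀ + 1) + B, by positivity, fun a b ha hab => ?_⟩
  have ha2 : (0:ℝ) < 2 * a := by linarith
  set m := min b (2 * a) with hm
  have ham : a ≤ m := le_min hab (by linarith)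
  have hmb : m ≤ b := min_le_left _ _
  have hm2a : m ≤ 2 * a := min_le_right _ _
  set f := fun t : ℝ => (t ^ ρ - a ^ ρ) * Real.exp (-c * (t ^ κ - a ^ κ)) with hf
  -- continuity of f on Ici a
  have hcρ : ContinuousOn (fun t : ℝ => t ^ ρ) (Set.Ici a) := fun t ht =>
    (Real.continuousAt_rpow_const t ρ (Or.inr hρ0.le)).continuousWithinAt
  have hcκ : ContinuousOn (fun t : ℝ => t ^ κ) (Set.Ici a) := fun t ht =>
    (Real.continuousAt_rpow_const t κ (Or.inr hκ0.le)).continuousWithinAt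
  have hcont : ContinuousOn f (Set.Ici a) := by
    exact (hcρ.sub continuousOn_const).mul
      (Real.continuous_exp.comp_continuousOn
        (continuousOn_const.mul (hcκ.sub continuousOn_const)))
  have hint1 : IntervalIntegrable f volume a m := by
    apply (hcont.mono ?_).intervalIntegrable
    rw [Set.uIcc_of_le ham]; exact Set.Icc_subset_Ici_self
  have hint2 : IntervalIntegrable f volume m b := by
    apply (hcont.mono ?_).intervalIntegrable
    rw [Set.uIcc_of_le hmb]
    exact fun x hx => le_trans ham hx.1
  rw [← intervalIntegral.integral_add_adjacent_intervals hint1 hint2]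
  -- Part 1
  set lam := c * (2 ^ κ - 1) * a ^ (κ - 1) with hlam
  have hlampos : 0 < lam := mul_pos hd (Real.rpow_pos_of_pos ha _)
  set g₁ := fun t : ℝ => (t - a) ^ ρ * Real.exp (-lam * (t - a)) with hg₁
  have h1 : ∫ t in a..m, f t ≤ K * a ^ ((1 - κ) * (ρ + 1)) := by
    have hg1c : Continuous g₁ := by
      apply Continuous.mul
      · exact (continuous_id.sub continuous_const).rpow_const (fun x => Or.inr hρ0.le)
      · exact Real.continuous_exp.comp
          (continuous_const.mul (continuous_id.sub continuous_const))
    have hpt : ∀ t ∈ Set.Icc a m, f t ≤ g₁ t := by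
      intro t ht
      have hta : a ≤ t := ht.1
      have ht2 : t ≤ 2 * a := ht.2.trans hm2a
      have e1 : t ^ ρ - a ^ ρ ≤ (t - a) ^ ρ := by
        have h := aux_add_rpow_le (x := t - a) (y := a) (by linarith) ha.le hρ0.le hρ1.le
        rw [sub_add_cancel] at h; linarith
      have e2 : Real.exp (-c * (t ^ κ - a ^ κ)) ≤ Real.exp (-lam * (t - a)) := by
        apply Real.exp_le_exp.mpr
        have h := aux_chord hκ0 hκ1 ha hta ht2
        nlinarith [mul_le_mul_of_nonneg_left h hc.le]
      exact mul_le_mul e1 e2 (Real.exp_nonneg _) (Real.rpow_nonneg (by linarith) _)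
    have step1 : ∫ t in a..m, f t ≤ ∫ t in a..m, g₁ t :=
      intervalIntegral.integral_mono_on ham hint1 (hg1c.intervalIntegrable _ _) hpt
    have step2 : ∫ t in a..m, g₁ t
        = ∫ s in (0:ℝ)..(m - a), s ^ ρ * Real.exp (-lam * s) := by
      have h := intervalIntegral.integral_comp_sub_right
        (a := a) (b := m) (fun s : ℝ => s ^ ρ * Real.exp (-lam * s)) a
      rw [sub_self] at h
      exact h
    have step3 : ∫ s in (0:ℝ)..(m - a), s ^ ρ * Real.exp (-lam * s)
        ≤ ∫ s in Set.Ioi (0:ℝ), s ^ ρ * Real.exp (-lam * s) := by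
      rw [intervalIntegral.integral_of_le (by linarith : (0:ℝ) ≤ m - a)]
      apply setIntegral_mono_set (aux_integrableOn1 (by linarith) hlampos)
      · refine (ae_restrict_iff' measurableSet_Ioi).mpr (ae_of_all _ fun x hx => ?_)
        exact mul_nonneg (Real.rpow_nonneg (le_of_lt hx) _) (Real.exp_nonneg _)
      · exact HasSubset.Subset.eventuallyLE Set.Ioc_subset_Ioi_self
    have step4 : ∫ s in Set.Ioi (0:ℝ), s ^ ρ * Real.exp (-lam * s)
        = lam ^ (-(ρ + 1)) * Real.Gamma (ρ + 1) := by
      have h := integral_rpow_mul_exp_neg_mul_rpow (p := 1) (q := ρ) (b := lam)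
        one_pos (by linarith) hlampos
      simpa [Real.rpow_one, div_one] using h
    have step5 : lam ^ (-(ρ + 1)) * Real.Gamma (ρ + 1) = K * a ^ ((1 - κ) * (ρ + 1)) := by
      rw [hlam, Real.mul_rpow hd.le (Real.rpow_nonneg ha.le _), ← Real.rpow_mul ha.le]
      rw [hKdef]
      rw [show (κ - 1) * -(ρ + 1) = (1 - κ) * (ρ + 1) by ring]
      ring
    calc ∫ t in a..m, f t ≤ ∫ t in a..m, g₁ t := step1
      _ = ∫ s in (0:ℝ)..(m - a), s ^ ρ * Real.exp (-lam * s) := step2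
      _ ≤ ∫ s in Set.Ioi (0:ℝ), s ^ ρ * Real.exp (-lam * s) := step3
      _ = lam ^ (-(ρ + 1)) * Real.Gamma (ρ + 1) := step4
      _ = K * a ^ ((1 - κ) * (ρ + 1)) := step5
  -- Part 2
  have h2 : ∫ t in m..b, f t ≤ B * Γ₀ := by
    by_cases hcase : b ≤ 2 * a
    · have hmb' : m = b := min_eq_left hcase
      rw [hmb', intervalIntegral.integral_same]
      positivity
    · have hm2 : m = 2 * a := min_eq_right (le_of_lt (not_le.mp hcase))
      set g₂ := fun t : ℝ => t ^ ρ * Real.exp (-(c * (1 - 2 ^ (-κ))) * t ^ κ) with hg₂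
      have hpt : ∀ t ∈ Set.Icc m b, f t ≤ g₂ t := by
        intro t ht
        have hta : 2 * a ≤ t := hm2 ▸ ht.1
        have htpos : 0 < t := lt_of_lt_of_le ha2 hta
        have e1 : t ^ ρ - a ^ ρ ≤ t ^ ρ := by
          have := Real.rpow_nonneg ha.le ρ; linarith
        have haκ : a ^ κ ≤ 2 ^ (-κ) * t ^ κ := by
          have h1' : a ^ κ ≤ (t / 2) ^ κ :=
            Real.rpow_le_rpow ha.le (by linarith) hκ0.le
          have h2' : (t / 2) ^ κ = t ^ κ / 2 ^ κ :=
            Real.div_rpow htpos.le (by norm_num : (0:ℝ) ≤ 2) κ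
          have h3' : ((2:ℝ) ^ (-κ)) = ((2:ℝ) ^ κ)⁻¹ := Real.rpow_neg (by norm_num) κ
          rw [h2'] at h1'
          rw [h3']
          rw [div_eq_mul_inv] at h1'
          linarith [h1']
        have e2 : Real.exp (-c * (t ^ κ - a ^ κ))
            ≤ Real.exp (-(c * (1 - 2 ^ (-κ))) * t ^ κ) := by
          apply Real.exp_le_exp.mpr
          nlinarith [mul_le_mul_of_nonneg_left haκ hc.le]
        have hsub : 0 ≤ t ^ ρ - a ^ ρ ∨ True := Or.inr trivial
        exact mul_le_mul e1 e2 (Real.exp_nonneg _) (Real.rpow_nonneg htpos.le _)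
      have hg2c : ContinuousOn g₂ (Set.Ici m) := by
        have hρc : ContinuousOn (fun t : ℝ => t ^ ρ) (Set.Ici m) := fun t ht =>
          (Real.continuousAt_rpow_const t ρ (Or.inr hρ0.le)).continuousWithinAt
        have hκc : ContinuousOn (fun t : ℝ => t ^ κ) (Set.Ici m) := fun t ht =>
          (Real.continuousAt_rpow_const t κ (Or.inr hκ0.le)).continuousWithinAt
        exact hρc.mul (Real.continuous_exp.comp_continuousOn (continuousOn_const.mul hκc))
      have hint2' : IntervalIntegrable g₂ volume m b := by
        apply (hg2c.mono ?_).intervalIntegrable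
        rw [Set.uIcc_of_le hmb]; exact Set.Icc_subset_Ici_self
      have step1 : ∫ t in m..b, f t ≤ ∫ t in m..b, g₂ t :=
        intervalIntegral.integral_mono_on hmb hint2 hint2' hpt
      have step3 : ∫ t in m..b, g₂ t ≤ ∫ t in Set.Ioi (0:ℝ), g₂ t := by
        rw [intervalIntegral.integral_of_le hmb]
        apply setIntegral_mono_set (aux_integrableOn hκ0 (by linarith) hc2)
        · refine (ae_restrict_iff' measurableSet_Ioi).mpr (ae_of_all _ fun x hx => ?_)
          exact mul_nonneg (Real.rpow_nonneg (le_of_lt hx) _) (Real.exp_nonneg _)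
        · refine HasSubset.Subset.eventuallyLE fun x hx => ?_
          have : m < x := hx.1
          have : 0 < x := lt_of_le_of_lt (by rw [hm2]; linarith) hx.1
          exact this
      have step4 : ∫ t in Set.Ioi (0:ℝ), g₂ t = B * Γ₀ := by
        have h := integral_rpow_mul_exp_neg_mul_rpow (p := κ) (q := ρ)
          (b := c * (1 - 2 ^ (-κ))) hκ0 (by linarith) hc2
        rw [hg₂, hBdef, hΓ₀def]
        rw [h]
      calc ∫ t in m..b, f t ≤ ∫ t in m..b, g₂ t := step1
        _ ≤ ∫ t in Set.Ioi (0:ℝ), g₂ t := step3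
        _ = B * Γ₀ := step4
  -- combine
  have hΓrw : (1 + ρ) / κ = (ρ + 1) / κ := by ring
  rw [hΓrw]
  have hP : 0 < a ^ (1 + ρ - κ) := Real.rpow_pos_of_pos ha _
  have hX : a ^ ((1 - κ) * (ρ + 1)) ≤ 1 + a ^ (1 + ρ - κ) := by
    rcases le_total a 1 with h | h
    · have h' : a ^ ((1 - κ) * (ρ + 1)) ≤ 1 :=
        Real.rpow_le_one ha.le h (mul_nonneg (by linarith) (by linarith))
      linarith
    · have h' : a ^ ((1 - κ) * (ρ + 1)) ≤ a ^ (1 + ρ - κ) :=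
        Real.rpow_le_rpow_of_exponent_le h (by nlinarith [mul_nonneg hκ0.le hρ0.le])
      linarith
  have hΓinv : 1 / Γ₀ * Γ₀ = 1 := by field_simp
  have htot : (∫ t in a..m, f t) + ∫ t in m..b, f t
      ≤ K * a ^ ((1 - κ) * (ρ + 1)) + B * Γ₀ := add_le_add h1 h2
  calc (∫ t in a..m, f t) + ∫ t in m..b, f t
      ≤ K * a ^ ((1 - κ) * (ρ + 1)) + B * Γ₀ := htot
    _ ≤ (K * (1 / Γ₀ + 1) + B) * (Γ₀ + a ^ (1 + ρ - κ)) := by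
        set P := a ^ (1 + ρ - κ) with hPdef
        have e : (K * (1 / Γ₀ + 1) + B) * (Γ₀ + P)
            = K * (1 / Γ₀ * Γ₀) + K * Γ₀ + B * Γ₀ + (K * (1 / Γ₀ + 1) + B) * P := by ring
        have hcoef : K ≤ K * (1 / Γ₀ + 1) + B := by
          nlinarith [mul_pos hK (one_div_pos.mpr hΓ₀)]
        have h5 : K * P ≤ (K * (1 / Γ₀ + 1) + B) * P := mul_le_mul_of_nonneg_right hcoef hP.le
        have h6 : K * a ^ ((1 - κ) * (ρ + 1)) ≤ K * (1 + P) :=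
          mul_le_mul_of_nonneg_left hX hK.le
        rw [e, hΓinv]
        nlinarith [mul_nonneg hK.le hΓ₀.le]
end

section
/- Let ε_k = e_1 + ξ_k with ξ_k i.i.d. N(0, I_n), n ≥ 2, and let ν̄_k = (1/k)Σ_{i=1}^k ξ_i. Define x_k = (e_1 + ν̄_k)/‖e_1 + ν̄_k‖. Then the first coordinate of √k · ((1/k)Σ_{i=1}^k x_i − e_1) converges almost surely to 0. -/
open MeasureTheory ProbabilityTheory Real Filter

lemma aux_map_eval_pi {ι : Type*} [Fintype ι] [DecidableEq ι] {α : ι → Type*} [∀ i, MeasurableSpace (α i)]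
    (m : ∀ i, Measure (α i)) [∀ i, IsProbabilityMeasure (m i)] (j : ι) :
    Measure.map (Function.eval j) (Measure.pi m) = m j := by
  ext s hs
  rw [Measure.map_apply (measurable_pi_apply j) hs]
  have h : Function.eval j ⁻¹' s =
      Set.pi Set.univ (Function.update (fun i => (Set.univ : Set (α i))) j s) := by
    ext y
    simp only [Set.mem_preimage, Set.mem_univ_pi, Function.eval]
    constructor
    · intro hy i
      rcases eq_or_ne i j with rfl | hij
      · simpa using hy
      · simp [Function.update_of_ne hij]
    · intro hy
      simpa using hy j
  rw [h, Measure.pi_pi]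
  rw [Finset.prod_eq_single j (fun i _ hij => by simp [Function.update_of_ne hij]) (by simp)]
  simp

lemma aux_pdf_mul (t x : ℝ) :
    gaussianPDFReal 0 1 x * Real.exp (t * x) = Real.exp (t ^ 2 / 2) * gaussianPDFReal t 1 x := by
  simp only [gaussianPDFReal, NNReal.coe_one, mul_one]
  rw [mul_assoc, ← Real.exp_add, mul_comm (Real.exp _), mul_assoc, ← Real.exp_add]
  congr 1
  ring

lemma aux_integrable_exp_gaussian (t : ℝ) :
    Integrable (fun x => Real.exp (t * x)) (gaussianReal 0 1) := by
  rw [gaussianReal_of_var_ne_zero 0 one_ne_zero, gaussianPDF_def]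
  have h1 : ∀ x : ℝ, ENNReal.ofReal (gaussianPDFReal 0 1 x)
      = (((gaussianPDFReal 0 1 x).toNNReal : NNReal) : ENNReal) := fun x => rfl
  simp_rw [h1]
  rw [integrable_withDensity_iff_integrable_smul
    ((measurable_gaussianPDFReal 0 1).real_toNNReal)]
  have : (fun x => ((gaussianPDFReal 0 1 x).toNNReal : NNReal) • Real.exp (t * x))
      = fun x => Real.exp (t ^ 2 / 2) * gaussianPDFReal t 1 x := by
    funext x
    rw [NNReal.smul_def, smul_eq_mul, Real.coe_toNNReal _ (gaussianPDFReal_nonneg 0 1 x)]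
    exact aux_pdf_mul t x
  rw [this]
  exact (integrable_gaussianPDFReal t 1).const_mul _

lemma aux_integral_exp_gaussian (t : ℝ) :
    ∫ x, Real.exp (t * x) ∂(gaussianReal 0 1) = Real.exp (t ^ 2 / 2) := by
  rw [gaussianReal_of_var_ne_zero 0 one_ne_zero, gaussianPDF_def]
  have h1 : ∀ x : ℝ, ENNReal.ofReal (gaussianPDFReal 0 1 x)
      = (((gaussianPDFReal 0 1 x).toNNReal : NNReal) : ENNReal) := fun x => rfl
  simp_rw [h1]
  rw [integral_withDensity_eq_integral_smul ((measurable_gaussianPDFReal 0 1).real_toNNReal)]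
  have : (fun x => ((gaussianPDFReal 0 1 x).toNNReal : NNReal) • Real.exp (t * x))
      = fun x => Real.exp (t ^ 2 / 2) * gaussianPDFReal t 1 x := by
    funext x
    rw [NNReal.smul_def, smul_eq_mul, Real.coe_toNNReal _ (gaussianPDFReal_nonneg 0 1 x)]
    exact aux_pdf_mul t x
  rw [this, integral_const_mul, integral_gaussianPDFReal_eq_one t one_ne_zero, mul_one]

lemma aux_sum_rpow (k : ℕ) :
    ∑ i ∈ Finset.Icc 1 k, ((i : ℝ)) ^ (-(3/4) : ℝ) ≤ 4 * (k : ℝ) ^ ((1/4) : ℝ) := by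
  induction k with
  | zero => simp
  | succ k ih =>
    rw [Finset.sum_Icc_succ_top (by omega)]
    set a : ℝ := ((k+1 : ℕ) : ℝ) ^ ((1/4) : ℝ) with ha
    set b : ℝ := ((k : ℕ) : ℝ) ^ ((1/4) : ℝ) with hb
    have hk1 : (0:ℝ) < ((k+1 : ℕ) : ℝ) := by positivity
    have hapos : 0 < a := Real.rpow_pos_of_pos hk1 _
    have hbnn : 0 ≤ b := Real.rpow_nonneg (Nat.cast_nonneg _) _
    have hab : b ≤ a := Real.rpow_le_rpow (Nat.cast_nonneg _) (by push_cast; linarith) (by norm_num)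
    have ha4 : a ^ (4:ℕ) = ((k+1 : ℕ) : ℝ) := by
      rw [ha, ← Real.rpow_natCast (_ ^ _) 4, ← Real.rpow_mul hk1.le]
      norm_num
    have hb4 : b ^ (4:ℕ) = ((k : ℕ) : ℝ) := by
      rw [hb, ← Real.rpow_natCast (_ ^ _) 4, ← Real.rpow_mul (Nat.cast_nonneg _)]
      norm_num
    have hlast : ((k+1 : ℕ) : ℝ) ^ (-(3/4) : ℝ) = (a ^ (3:ℕ))⁻¹ := by
      rw [ha, ← Real.rpow_natCast (_ ^ _) 3, ← Real.rpow_mul hk1.le, ← Real.rpow_neg hk1.le]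
      norm_num
    have hdiff : a ^ (4:ℕ) - b ^ (4:ℕ) = 1 := by rw [ha4, hb4]; push_cast; ring
    have key : (a ^ (3:ℕ))⁻¹ ≤ 4 * (a - b) := by
      rw [inv_le_iff_one_le_mul₀ (by positivity)]
      nlinarith [sq_nonneg (a - b), sq_nonneg (a + b), mul_nonneg hbnn hapos.le,
        mul_nonneg (mul_nonneg hbnn hbnn) hapos.le, sq_nonneg a, sq_nonneg b,
        mul_nonneg (sq_nonneg (a-b)) (mul_nonneg hapos.le hbnn)]
    rw [hlast]
    linarith

lemma aux_summable : Summable (fun k : ℕ => 2 * Real.exp (-((k:ℝ) ^ ((1/4):ℝ)) / 2)) := by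
  have hb : Summable (fun k : ℕ => 2 * ((4:ℝ) * 16 ^ 8) * (((k:ℝ) + 1) ^ 2)⁻¹) := by
    apply Summable.mul_left
    have h0 : Summable (fun k : ℕ => ((k:ℝ) ^ 2)⁻¹) := by
      simpa using Real.summable_one_div_nat_pow.mpr (show 1 < 2 by norm_num)
    have := (summable_nat_add_iff 1).mpr h0
    simpa [add_comm] using this
  refine Summable.of_nonneg_of_le (fun k => by positivity) (fun k => ?_) hb
  rcases Nat.eq_zero_or_pos k with rfl | hk
  · norm_num [Real.zero_rpow (show ((1:ℝ)/4) ≠ 0 by norm_num), Real.exp_zero]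
  · have hk1 : (1:ℝ) ≤ (k:ℝ) := by exact_mod_cast hk
    have hx : (0:ℝ) ≤ (k:ℝ) ^ ((1/4):ℝ) / 2 := by positivity
    have hexp : ((k:ℝ) ^ ((1/4):ℝ) / 2 / 8) ^ (8:ℕ) ≤ Real.exp ((k:ℝ) ^ ((1/4):ℝ) / 2) := by
      calc ((k:ℝ) ^ ((1/4):ℝ) / 2 / 8) ^ (8:ℕ)
          ≤ Real.exp ((k:ℝ) ^ ((1/4):ℝ) / 2 / 8) ^ (8:ℕ) := by
            refine pow_le_pow_left₀ (by positivity) ?_ 8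
            linarith [Real.add_one_le_exp ((k:ℝ) ^ ((1/4):ℝ) / 2 / 8), hx]
        _ = Real.exp ((k:ℝ) ^ ((1/4):ℝ) / 2) := by
            rw [← Real.exp_nat_mul]; congr 1; ring
    have hpow : ((k:ℝ) ^ ((1/4):ℝ) / 2 / 8) ^ (8:ℕ) = (k:ℝ) ^ 2 / 16 ^ 8 := by
      rw [div_div, div_pow, ← Real.rpow_natCast ((k:ℝ) ^ ((1/4):ℝ)) 8,
        ← Real.rpow_mul (Nat.cast_nonneg _)]
      norm_num
    have hexp2 : (k:ℝ) ^ 2 / 16 ^ 8 ≤ Real.exp ((k:ℝ) ^ ((1/4):ℝ) / 2) := hpow ▸ hexp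
    have hexpneg : Real.exp (-((k:ℝ) ^ ((1/4):ℝ)) / 2) = (Real.exp ((k:ℝ) ^ ((1/4):ℝ) / 2))⁻¹ := by
      rw [← Real.exp_neg]; ring_nf
    rw [hexpneg]
    have h1 : (Real.exp ((k:ℝ) ^ ((1/4):ℝ) / 2))⁻¹ ≤ ((k:ℝ) ^ 2 / 16 ^ 8)⁻¹ :=
      inv_anti₀ (by positivity) hexp2
    have h2 : ((k:ℝ) ^ 2 / 16 ^ 8)⁻¹ = 16 ^ 8 * ((k:ℝ) ^ 2)⁻¹ := by
      field_simp
    have h3 : ((k:ℝ) + 1) ^ 2 ≤ 4 * (k:ℝ) ^ 2 := by nlinarith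
    have h5 : (0:ℝ) < ((k:ℝ) + 1) ^ 2 := by positivity
    have hk2 : (0:ℝ) < (k:ℝ) ^ 2 := by positivity
    have h4 : (16:ℝ) ^ 8 * ((k:ℝ) ^ 2)⁻¹ ≤ 4 * 16 ^ 8 * (((k:ℝ) + 1) ^ 2)⁻¹ := by
      rw [show (4:ℝ) * 16 ^ 8 * (((k:ℝ) + 1) ^ 2)⁻¹ = (4 * 16 ^ 8) / (((k:ℝ) + 1) ^ 2) by ring,
        show (16:ℝ) ^ 8 * ((k:ℝ) ^ 2)⁻¹ = (16 ^ 8) / ((k:ℝ) ^ 2) by ring,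
        div_le_div_iff₀ hk2 h5]
      nlinarith
    calc 2 * (Real.exp ((k:ℝ) ^ ((1/4):ℝ) / 2))⁻¹ ≤ 2 * (16 ^ 8 * ((k:ℝ) ^ 2)⁻¹) := by
          rw [h2] at h1; linarith
      _ ≤ 2 * (4 * 16 ^ 8 * (((k:ℝ) + 1) ^ 2)⁻¹) := by linarith
      _ = 2 * ((4:ℝ) * 16 ^ 8) * (((k:ℝ) + 1) ^ 2)⁻¹ := by ring

lemma aux_prob {Ω : Type*} [MeasurableSpace Ω] (μ : Measure Ω) [IsProbabilityMeasure μ]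
    (Y : ℕ → Ω → ℝ) (hYm : ∀ i, Measurable (Y i))
    (hYi : iIndepFun Y μ)
    (hYd : ∀ i, Measure.map (Y i) μ = gaussianReal 0 1) :
    ∀ᵐ ω ∂μ, ∀ᶠ k in atTop, |∑ i ∈ Finset.Icc 1 k, Y i ω| ≤ (k:ℝ) ^ ((5/8):ℝ) := by
  have hint : ∀ i (t : ℝ), Integrable (fun ω => Real.exp (t * Y i ω)) μ := by
    intro i t
    have h := aux_integrable_exp_gaussian t
    rw [← hYd i] at h
    exact (integrable_map_measure
      (Real.continuous_exp.comp (continuous_const.mul continuous_id)).measurable.aestronglyMeasurable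
      (hYm i).aemeasurable).mp h
  have hmgf : ∀ i (t : ℝ), mgf (Y i) μ t = Real.exp (t ^ 2 / 2) := by
    intro i t
    have h := MeasureTheory.integral_map (μ := μ) (hYm i).aemeasurable
      (f := fun x => Real.exp (t * x))
      (Real.continuous_exp.comp (continuous_const.mul continuous_id)).measurable.aestronglyMeasurable
    rw [hYd i, aux_integral_exp_gaussian t] at h
    exact h.symm
  have hmgfsum : ∀ (k : ℕ) (t : ℝ),
      mgf (∑ i ∈ Finset.Icc 1 k, Y i) μ t = Real.exp (t ^ 2 / 2) ^ k := by
    intro k t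
    rw [hYi.mgf_sum hYm]
    rw [Finset.prod_congr rfl (fun i _ => hmgf i t), Finset.prod_const, Nat.card_Icc]
    simp
  have hintsum : ∀ (k : ℕ) (t : ℝ),
      Integrable (fun ω => Real.exp (t * (∑ i ∈ Finset.Icc 1 k, Y i) ω)) μ :=
    fun k t => hYi.integrable_exp_mul_sum hYm (fun i _ => hint i t)
  set B : ℕ → Set Ω :=
    fun k => {ω | (k:ℝ) ^ ((5/8):ℝ) < |(∑ i ∈ Finset.Icc 1 k, Y i) ω|} with hB
  have hBk : ∀ k : ℕ, μ (B k) ≤ ENNReal.ofReal (2 * Real.exp (-((k:ℝ) ^ ((1/4):ℝ)) / 2)) := by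
    intro k
    rcases Nat.eq_zero_or_pos k with rfl | hk
    · calc μ (B 0) ≤ 1 := prob_le_one
        _ ≤ ENNReal.ofReal (2 * Real.exp (-(((0:ℕ):ℝ) ^ ((1/4):ℝ)) / 2)) := by
          norm_num [Real.zero_rpow (show ((1:ℝ)/4) ≠ 0 by norm_num)]
    · have hkpos : (0:ℝ) < (k:ℝ) := by exact_mod_cast hk
      set a : ℝ := (k:ℝ) ^ ((5/8):ℝ) with ha
      set t : ℝ := (k:ℝ) ^ (-(3/8):ℝ) with ht
      have htpos : 0 < t := Real.rpow_pos_of_pos hkpos _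
      have hexp : -t * a + (k:ℝ) * (t ^ 2 / 2) = -((k:ℝ) ^ ((1/4):ℝ)) / 2 := by
        have h1 : t * a = (k:ℝ) ^ ((1/4):ℝ) := by
          rw [ht, ha, ← Real.rpow_add hkpos]; norm_num
        have h2 : (k:ℝ) * t ^ 2 = (k:ℝ) ^ ((1/4):ℝ) := by
          rw [ht, ← Real.rpow_natCast ((k:ℝ) ^ (-(3/8):ℝ)) 2, ← Real.rpow_mul hkpos.le]
          nth_rewrite 1 [← Real.rpow_one (k:ℝ)]
          rw [← Real.rpow_add hkpos]
          norm_num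
        nlinarith [h1, h2]
      have hup : (μ {ω | a ≤ (∑ i ∈ Finset.Icc 1 k, Y i) ω}).toReal ≤
          Real.exp (-((k:ℝ) ^ ((1/4):ℝ)) / 2) := by
        have := measure_ge_le_exp_mul_mgf (X := ∑ i ∈ Finset.Icc 1 k, Y i) (μ := μ) a htpos.le
          (hintsum k t)
        rw [hmgfsum k t] at this
        refine this.trans (le_of_eq ?_)
        rw [← Real.exp_nat_mul, ← Real.exp_add, ← hexp]
      have hlo : (μ {ω | (∑ i ∈ Finset.Icc 1 k, Y i) ω ≤ -a}).toReal ≤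
          Real.exp (-((k:ℝ) ^ ((1/4):ℝ)) / 2) := by
        have := measure_le_le_exp_mul_mgf (X := ∑ i ∈ Finset.Icc 1 k, Y i) (μ := μ) (-a)
          (neg_nonpos.mpr htpos.le) (hintsum k (-t))
        rw [hmgfsum k (-t)] at this
        refine this.trans (le_of_eq ?_)
        rw [← Real.exp_nat_mul, ← Real.exp_add, ← hexp]
        congr 1
        ring
      have hsub : B k ⊆ {ω | a ≤ (∑ i ∈ Finset.Icc 1 k, Y i) ω} ∪
          {ω | (∑ i ∈ Finset.Icc 1 k, Y i) ω ≤ -a} := by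
        intro ω hω
        simp only [hB, Set.mem_setOf_eq] at hω
        rcases le_or_gt a ((∑ i ∈ Finset.Icc 1 k, Y i) ω) with h | h
        · exact Or.inl h
        · refine Or.inr ?_
          simp only [Set.mem_setOf_eq]
          rcases abs_cases ((∑ i ∈ Finset.Icc 1 k, Y i) ω) with ⟨he, _⟩ | ⟨he, _⟩
          · linarith [hω, he]
          · linarith [hω, he]
      have h1' : μ {ω | a ≤ (∑ i ∈ Finset.Icc 1 k, Y i) ω} ≤
          ENNReal.ofReal (Real.exp (-((k:ℝ) ^ ((1/4):ℝ)) / 2)) := by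
        rw [← ENNReal.le_ofReal_iff_toReal_le (measure_ne_top μ _) (Real.exp_nonneg _)] at hup
        exact hup
      have h2' : μ {ω | (∑ i ∈ Finset.Icc 1 k, Y i) ω ≤ -a} ≤
          ENNReal.ofReal (Real.exp (-((k:ℝ) ^ ((1/4):ℝ)) / 2)) := by
        rw [← ENNReal.le_ofReal_iff_toReal_le (measure_ne_top μ _) (Real.exp_nonneg _)] at hlo
        exact hlo
      calc μ (B k) ≤ μ ({ω | a ≤ (∑ i ∈ Finset.Icc 1 k, Y i) ω} ∪
            {ω | (∑ i ∈ Finset.Icc 1 k, Y i) ω ≤ -a}) := measure_mono hsub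
        _ ≤ μ {ω | a ≤ (∑ i ∈ Finset.Icc 1 k, Y i) ω} +
            μ {ω | (∑ i ∈ Finset.Icc 1 k, Y i) ω ≤ -a} := measure_union_le _ _
        _ ≤ ENNReal.ofReal (Real.exp (-((k:ℝ) ^ ((1/4):ℝ)) / 2)) +
            ENNReal.ofReal (Real.exp (-((k:ℝ) ^ ((1/4):ℝ)) / 2)) := add_le_add h1' h2'
        _ = ENNReal.ofReal (2 * Real.exp (-((k:ℝ) ^ ((1/4):ℝ)) / 2)) := by
            rw [← ENNReal.ofReal_add (Real.exp_nonneg _) (Real.exp_nonneg _)]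
            ring_nf
  have htsum : (∑' k, μ (B k)) ≠ ⊤ := by
    have hle : (∑' k, μ (B k)) ≤
        ∑' k : ℕ, ENNReal.ofReal (2 * Real.exp (-((k:ℝ) ^ ((1/4):ℝ)) / 2)) :=
      ENNReal.tsum_le_tsum hBk
    have heq : (∑' k : ℕ, ENNReal.ofReal (2 * Real.exp (-((k:ℝ) ^ ((1/4):ℝ)) / 2)))
        = ENNReal.ofReal (∑' k : ℕ, 2 * Real.exp (-((k:ℝ) ^ ((1/4):ℝ)) / 2)) :=
      (ENNReal.ofReal_tsum_of_nonneg (fun k => by positivity) aux_summable).symm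
    rw [heq] at hle
    exact ne_top_of_le_ne_top ENNReal.ofReal_ne_top hle
  filter_upwards [ae_eventually_notMem htsum] with ω hω
  filter_upwards [hω] with k hk
  simp only [hB, Set.mem_setOf_eq, not_lt] at hk
  simpa using hk

lemma aux_alg0 (A T : ℝ) (hT : 0 ≤ T) : |(Real.sqrt (A ^ 2 + T))⁻¹ * A| ≤ 1 := by
  rcases eq_or_lt_of_le (Real.sqrt_nonneg (A ^ 2 + T)) with h0 | hpos
  · rw [← h0]; norm_num
  · have hAr : |A| ≤ Real.sqrt (A ^ 2 + T) := by
      rw [← Real.sqrt_sq_eq_abs]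
      exact Real.sqrt_le_sqrt (by linarith)
    rw [abs_mul, abs_inv, abs_of_pos hpos, inv_mul_le_iff₀ hpos, mul_one]
    exact hAr

lemma aux_alg {A T : ℝ} (hA : 1/2 ≤ A) (hT : 0 ≤ T) :
    |(Real.sqrt (A ^ 2 + T))⁻¹ * A - 1| ≤ 2 * T := by
  have hApos : 0 < A := by linarith
  have hrA : A ≤ Real.sqrt (A ^ 2 + T) := by
    calc A = Real.sqrt (A ^ 2) := (Real.sqrt_sq hApos.le).symm
      _ ≤ Real.sqrt (A ^ 2 + T) := Real.sqrt_le_sqrt (by linarith)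
  set r := Real.sqrt (A ^ 2 + T) with hr
  have hrpos : 0 < r := lt_of_lt_of_le hApos hrA
  have hrle : r ≤ A + T := by
    rw [hr]
    calc Real.sqrt (A ^ 2 + T) ≤ Real.sqrt ((A + T) ^ 2) := Real.sqrt_le_sqrt (by nlinarith)
      _ = A + T := Real.sqrt_sq (by linarith)
  have hinv2 : r⁻¹ ≤ 2 := by
    rw [inv_le_iff_one_le_mul₀ hrpos]
    linarith
  have h1 : r⁻¹ * A ≤ 1 := by
    rw [inv_mul_le_iff₀ hrpos, mul_one]; exact hrA
  have h2 : 1 - r⁻¹ * A ≤ 2 * T := by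
    have heq : 1 - r⁻¹ * A = r⁻¹ * (r - A) := by
      field_simp
    rw [heq]
    exact mul_le_mul hinv2 (by linarith) (by linarith) (by norm_num)
  exact abs_le.mpr ⟨by linarith, by linarith⟩

lemma aux_det (n : ℕ) (y : ℕ → ℝ) (hy1 : ∀ i, |y i| ≤ 1)
    (hy2 : ∀ᶠ k in atTop, |y k - 1| ≤ 2 * n * (k:ℝ) ^ (-(3/4) : ℝ)) :
    Filter.Tendsto
      (fun k : ℕ => Real.sqrt k * ((k : ℝ)⁻¹ * (∑ i ∈ Finset.Icc 1 k, y i) - 1))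
      Filter.atTop (nhds 0) := by
  obtain ⟨N, hN⟩ := eventually_atTop.mp hy2
  have key : ∀ k : ℕ, |∑ i ∈ Finset.Icc 1 k, (y i - 1)| ≤
      2 * N + 8 * n * (k:ℝ) ^ ((1/4) : ℝ) := by
    intro k
    calc |∑ i ∈ Finset.Icc 1 k, (y i - 1)| ≤ ∑ i ∈ Finset.Icc 1 k, |y i - 1| :=
        Finset.abs_sum_le_sum_abs _ _
      _ ≤ ∑ i ∈ Finset.Icc 1 k, ((if i < N then 2 else 0) + 2 * n * (i:ℝ) ^ (-(3/4) : ℝ)) := by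
        refine Finset.sum_le_sum (fun i _ => ?_)
        have hnn : (0:ℝ) ≤ 2 * n * (i:ℝ) ^ (-(3/4) : ℝ) := by positivity
        rcases lt_or_ge i N with h | h
        · have h2 : |y i - 1| ≤ 2 := by
            calc |y i - 1| ≤ |y i| + |(1:ℝ)| := abs_sub (y i) 1
              _ ≤ 2 := by simpa using by linarith [hy1 i]
          simp only [if_pos h]
          linarith
        · have := hN i h
          simp only [if_neg (not_lt.mpr h)]
          linarith
      _ = (∑ i ∈ Finset.Icc 1 k, (if i < N then (2:ℝ) else 0))
          + ∑ i ∈ Finset.Icc 1 k, 2 * n * (i:ℝ) ^ (-(3/4) : ℝ) := Finset.sum_add_distrib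
      _ ≤ 2 * N + 8 * n * (k:ℝ) ^ ((1/4) : ℝ) := by
        have hind : (∑ i ∈ Finset.Icc 1 k, (if i < N then (2:ℝ) else 0)) ≤ 2 * N := by
          rw [← Finset.sum_filter]
          have hsub : (Finset.Icc 1 k).filter (· < N) ⊆ Finset.range N :=
            fun i hi => Finset.mem_range.mpr (Finset.mem_filter.mp hi).2
          have hcard : (((Finset.Icc 1 k).filter (· < N)).card : ℝ) ≤ N := by
            exact_mod_cast le_trans (Finset.card_le_card hsub) (by simp)
          rw [Finset.sum_const, nsmul_eq_mul]
          nlinarith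
        have hsum : ∑ i ∈ Finset.Icc 1 k, 2 * n * (i:ℝ) ^ (-(3/4) : ℝ)
            ≤ 8 * n * (k:ℝ) ^ ((1/4) : ℝ) := by
          rw [← Finset.mul_sum]
          have h := mul_le_mul_of_nonneg_left (aux_sum_rpow k)
            (show (0:ℝ) ≤ 2 * n by positivity)
          linarith
        linarith
  have hbd : ∀ᶠ k : ℕ in atTop,
      ‖Real.sqrt k * ((k : ℝ)⁻¹ * (∑ i ∈ Finset.Icc 1 k, y i) - 1)‖ ≤
        2 * N * (k:ℝ) ^ (-(1/2) : ℝ) + 8 * n * (k:ℝ) ^ (-(1/4) : ℝ) := by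
    filter_upwards [eventually_ge_atTop 1] with k hk
    have hkpos : (0:ℝ) < (k:ℝ) := by exact_mod_cast hk
    have hrw : (k : ℝ)⁻¹ * (∑ i ∈ Finset.Icc 1 k, y i) - 1
        = (k : ℝ)⁻¹ * (∑ i ∈ Finset.Icc 1 k, (y i - 1)) := by
      rw [Finset.sum_sub_distrib, Finset.sum_const, Nat.card_Icc]
      simp only [Nat.add_sub_cancel, nsmul_eq_mul, mul_one]
      field_simp
    rw [hrw, norm_eq_abs, abs_mul, abs_mul]
    have hs : |Real.sqrt k| = (k:ℝ) ^ ((1/2) : ℝ) := by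
      rw [abs_of_nonneg (Real.sqrt_nonneg _), Real.sqrt_eq_rpow]
    have hi : |((k:ℝ))⁻¹| = (k:ℝ) ^ (-(1:ℝ)) := by
      rw [abs_of_nonneg (by positivity), Real.rpow_neg_one]
    rw [hs, hi]
    calc (k:ℝ) ^ ((1/2) : ℝ) * ((k:ℝ) ^ (-(1:ℝ)) * |∑ i ∈ Finset.Icc 1 k, (y i - 1)|)
        ≤ (k:ℝ) ^ ((1/2) : ℝ) * ((k:ℝ) ^ (-(1:ℝ)) * (2 * N + 8 * n * (k:ℝ) ^ ((1/4) : ℝ))) := by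
          have h1 : (0:ℝ) ≤ (k:ℝ) ^ ((1/2) : ℝ) := by positivity
          have h2 : (0:ℝ) ≤ (k:ℝ) ^ (-(1:ℝ)) := by positivity
          exact mul_le_mul_of_nonneg_left (mul_le_mul_of_nonneg_left (key k) h2) h1
      _ = 2 * N * (k:ℝ) ^ (-(1/2) : ℝ) + 8 * n * (k:ℝ) ^ (-(1/4) : ℝ) := by
          have e1 : (k:ℝ) ^ ((1/2) : ℝ) * (k:ℝ) ^ (-(1:ℝ)) = (k:ℝ) ^ (-(1/2) : ℝ) := by
            rw [← Real.rpow_add hkpos]; norm_num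
          have e2 : (k:ℝ) ^ (-(1/2) : ℝ) * (k:ℝ) ^ ((1/4) : ℝ) = (k:ℝ) ^ (-(1/4) : ℝ) := by
            rw [← Real.rpow_add hkpos]; norm_num
          calc (k:ℝ) ^ ((1/2) : ℝ) * ((k:ℝ) ^ (-(1:ℝ)) * (2 * N + 8 * n * (k:ℝ) ^ ((1/4) : ℝ)))
              = ((k:ℝ) ^ ((1/2) : ℝ) * (k:ℝ) ^ (-(1:ℝ))) * (2 * N)
                + (((k:ℝ) ^ ((1/2) : ℝ) * (k:ℝ) ^ (-(1:ℝ))) * (k:ℝ) ^ ((1/4):ℝ)) * (8 * n) := by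
                ring
            _ = 2 * N * (k:ℝ) ^ (-(1/2) : ℝ) + 8 * n * (k:ℝ) ^ (-(1/4) : ℝ) := by
                rw [e1, e2]; ring
  have hg : Filter.Tendsto
      (fun k : ℕ => 2 * (N:ℝ) * (k:ℝ) ^ (-(1/2) : ℝ) + 8 * n * (k:ℝ) ^ (-(1/4) : ℝ))
      atTop (nhds 0) := by
    have t1 : Filter.Tendsto (fun k : ℕ => (k:ℝ) ^ (-(1/2) : ℝ)) atTop (nhds 0) :=
      (tendsto_rpow_neg_atTop (by norm_num : (0:ℝ) < 1/2)).comp tendsto_natCast_atTop_atTop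
    have t2 : Filter.Tendsto (fun k : ℕ => (k:ℝ) ^ (-(1/4) : ℝ)) atTop (nhds 0) :=
      (tendsto_rpow_neg_atTop (by norm_num : (0:ℝ) < 1/4)).comp tendsto_natCast_atTop_atTop
    have := (t1.const_mul (2 * (N:ℝ))).add (t2.const_mul (8 * (n:ℝ)))
    simpa using this
  exact squeeze_zero_norm' hbd hg


/-- With `ξ i` i.i.d. `N(0, Iₙ)` (`n ≥ 2`), `ν̄_k = (1/k)∑_{i≤k} ξ i` and
`x_k = (e₁ + ν̄_k)/‖e₁ + ν̄_k‖`, the first coordinate of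
`√k ((1/k)∑_{i≤k} x_i − e₁)` converges almost surely to `0`. -/
theorem stmt_15 {Ω : Type*} [MeasurableSpace Ω] (μ : Measure Ω) [IsProbabilityMeasure μ]
    (n : ℕ) (hn : 2 ≤ n) (ξ : ℕ → Ω → Fin n → ℝ)
    (hmeas : ∀ i, Measurable (ξ i))
    (hindep : iIndepFun ξ μ)
    (hdist : ∀ i, Measure.map (ξ i) μ = Measure.pi fun _ : Fin n => gaussianReal 0 1)
    (e₁ : Fin n → ℝ) (he₁ : e₁ = Pi.single (⟨0, by omega⟩ : Fin n) 1)
    (x : ℕ → Ω → Fin n → ℝ)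
    (hx : ∀ k ω, x k ω =
      (Real.sqrt (∑ j, (e₁ j + (k : ℝ)⁻¹ * ∑ i ∈ Finset.Icc 1 k, ξ i ω j) ^ 2))⁻¹ •
        (fun j => e₁ j + (k : ℝ)⁻¹ * ∑ i ∈ Finset.Icc 1 k, ξ i ω j)) :
    ∀ᵐ ω ∂μ, Filter.Tendsto
      (fun k : ℕ => Real.sqrt k *
        ((k : ℝ)⁻¹ * (∑ i ∈ Finset.Icc 1 k, x i ω (⟨0, by omega⟩ : Fin n)) - 1))
      Filter.atTop (nhds 0) := by
  classical
  have hae : ∀ᵐ ω ∂μ, ∀ j : Fin n, ∀ᶠ k in Filter.atTop,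
      |∑ i ∈ Finset.Icc 1 k, ξ i ω j| ≤ (k:ℝ) ^ ((5/8):ℝ) := by
    rw [ae_all_iff]
    intro j
    refine aux_prob μ (fun i ω => ξ i ω j)
      (fun i => (measurable_pi_apply j).comp (hmeas i)) ?_ ?_
    · exact hindep.comp (fun _ => fun v => v j) (fun _ => measurable_pi_apply j)
    · intro i
      show Measure.map ((Function.eval j) ∘ (ξ i)) μ = gaussianReal 0 1
      rw [← Measure.map_map (measurable_pi_apply j) (hmeas i), hdist i,
        aux_map_eval_pi]
  filter_upwards [hae] with ω hω
  set p : Fin n := (⟨0, by omega⟩ : Fin n) with hp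
  have he₁p : e₁ p = 1 := by rw [he₁]; exact Pi.single_eq_same _ _
  have he₁o : ∀ j : Fin n, j ≠ p → e₁ j = 0 := by
    intro j hj; rw [he₁]; exact Pi.single_eq_of_ne hj _
  refine aux_det n (fun i => x i ω p) ?_ ?_
  · intro i
    show |x i ω p| ≤ 1
    rw [hx i ω]
    simp only [Pi.smul_apply, smul_eq_mul]
    rw [Fintype.sum_eq_add_sum_compl p
      (fun j => (e₁ j + (i : ℝ)⁻¹ * ∑ l ∈ Finset.Icc 1 i, ξ l ω j) ^ 2)]
    exact aux_alg0 _ _ (Finset.sum_nonneg fun j _ => sq_nonneg _)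
  · have hev : ∀ᶠ k in Filter.atTop, ∀ j : Fin n,
        |∑ i ∈ Finset.Icc 1 k, ξ i ω j| ≤ (k:ℝ) ^ ((5/8):ℝ) :=
      Filter.eventually_all.mpr hω
    filter_upwards [hev, Filter.eventually_ge_atTop (16 * n ^ 2),
      Filter.eventually_ge_atTop 1] with k hk hk16 hk1
    have hkpos : (0:ℝ) < (k:ℝ) := by exact_mod_cast hk1
    have hk1' : (1:ℝ) ≤ (k:ℝ) := by exact_mod_cast hk1
    set δ : ℝ := (k:ℝ) ^ (-(3/8):ℝ) with hδdef
    have hδ0 : 0 ≤ δ := Real.rpow_nonneg hkpos.le _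
    set ν : Fin n → ℝ := fun j => (k:ℝ)⁻¹ * ∑ i ∈ Finset.Icc 1 k, ξ i ω j with hν
    have hνb : ∀ j, |ν j| ≤ δ := by
      intro j
      rw [hν]
      simp only
      rw [abs_mul, abs_of_nonneg (inv_nonneg.mpr hkpos.le)]
      calc (k:ℝ)⁻¹ * |∑ i ∈ Finset.Icc 1 k, ξ i ω j|
          ≤ (k:ℝ)⁻¹ * (k:ℝ) ^ ((5/8):ℝ) :=
            mul_le_mul_of_nonneg_left (hk j) (by positivity)
        _ = δ := by
            rw [hδdef, ← Real.rpow_neg_one (k:ℝ), ← Real.rpow_add hkpos]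
            norm_num
    have hδsq : δ ^ 2 = (k:ℝ) ^ (-(3/4):ℝ) := by
      rw [hδdef, ← Real.rpow_natCast ((k:ℝ) ^ (-(3/8):ℝ)) 2, ← Real.rpow_mul hkpos.le]
      norm_num
    have hnδ : (n:ℝ) * δ ^ 2 ≤ 1/4 := by
      have h1 : δ ^ 2 ≤ (k:ℝ) ^ (-(1/2):ℝ) := by
        rw [hδsq]
        exact Real.rpow_le_rpow_of_exponent_le hk1' (by norm_num)
      have h2 : (k:ℝ) ^ (-(1/2):ℝ) = (Real.sqrt (k:ℝ))⁻¹ := by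
        rw [Real.rpow_neg hkpos.le, Real.sqrt_eq_rpow]
      have h3 : (4:ℝ) * n ≤ Real.sqrt (k:ℝ) := by
        have hc : ((4:ℝ) * n) ^ 2 ≤ (k:ℝ) := by
          have : ((16 * n ^ 2 : ℕ) : ℝ) ≤ (k:ℝ) := by exact_mod_cast hk16
          push_cast at this
          nlinarith
        calc (4:ℝ) * n = Real.sqrt (((4:ℝ) * n) ^ 2) := (Real.sqrt_sq (by positivity)).symm
          _ ≤ Real.sqrt (k:ℝ) := Real.sqrt_le_sqrt hc
      have hn2 : (2:ℝ) ≤ (n:ℝ) := by exact_mod_cast hn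
      have hsqpos : 0 < Real.sqrt (k:ℝ) := Real.sqrt_pos.mpr hkpos
      have h4 : (Real.sqrt (k:ℝ))⁻¹ ≤ ((4:ℝ) * n)⁻¹ := inv_anti₀ (by positivity) h3
      have h5 : (n:ℝ) * ((4:ℝ) * n)⁻¹ = 1/4 := by
        field_simp
      calc (n:ℝ) * δ ^ 2 ≤ (n:ℝ) * (Real.sqrt (k:ℝ))⁻¹ := by
            rw [← h2]
            exact mul_le_mul_of_nonneg_left h1 (by positivity)
        _ ≤ (n:ℝ) * ((4:ℝ) * n)⁻¹ := mul_le_mul_of_nonneg_left h4 (by positivity)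
        _ = 1/4 := h5
    have hn2 : (2:ℝ) ≤ (n:ℝ) := by exact_mod_cast hn
    have hδhalf : δ ≤ 1/2 := by nlinarith [hnδ, hδ0, hn2, sq_nonneg δ]
    have main : ∀ g : Fin n → ℝ, (∀ j, |g j| ≤ δ) →
        |(Real.sqrt (∑ j, (e₁ j + g j) ^ 2))⁻¹ * (e₁ p + g p) - 1|
          ≤ 2 * n * (k:ℝ) ^ (-(3/4) : ℝ) := by
      intro g hg
      rw [Fintype.sum_eq_add_sum_compl p (fun j => (e₁ j + g j) ^ 2)]
      have hT0 : (0:ℝ) ≤ ∑ j ∈ ({p}ᶜ : Finset (Fin n)), (e₁ j + g j) ^ 2 :=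
        Finset.sum_nonneg fun j _ => sq_nonneg _
      have hTle : ∑ j ∈ ({p}ᶜ : Finset (Fin n)), (e₁ j + g j) ^ 2 ≤ n * δ ^ 2 := by
        calc ∑ j ∈ ({p}ᶜ : Finset (Fin n)), (e₁ j + g j) ^ 2
            ≤ ∑ _j ∈ ({p}ᶜ : Finset (Fin n)), δ ^ 2 := by
              refine Finset.sum_le_sum (fun j hj => ?_)
              have hjp : j ≠ p := by simpa using hj
              rw [he₁o j hjp, zero_add]
              have := abs_le.mp (hg j)
              exact sq_le_sq' (by linarith [this.1]) this.2
          _ = (({p}ᶜ : Finset (Fin n)).card : ℝ) * δ ^ 2 := by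
              rw [Finset.sum_const, nsmul_eq_mul]
          _ ≤ (n:ℝ) * δ ^ 2 := by
              have hcard : (({p}ᶜ : Finset (Fin n)).card : ℝ) ≤ (n:ℝ) := by
                exact_mod_cast le_trans (Finset.card_le_univ _) (by simp)
              exact mul_le_mul_of_nonneg_right hcard (sq_nonneg _)
      have hA : 1/2 ≤ e₁ p + g p := by
        rw [he₁p]
        have := (abs_le.mp (hg p)).1
        linarith
      calc |(Real.sqrt ((e₁ p + g p) ^ 2 + ∑ j ∈ ({p}ᶜ : Finset (Fin n)), (e₁ j + g j) ^ 2))⁻¹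
            * (e₁ p + g p) - 1|
          ≤ 2 * ∑ j ∈ ({p}ᶜ : Finset (Fin n)), (e₁ j + g j) ^ 2 := aux_alg hA hT0
        _ ≤ 2 * ((n:ℝ) * δ ^ 2) := by linarith
        _ = 2 * n * (k:ℝ) ^ (-(3/4) : ℝ) := by rw [hδsq]; ring
    show |x k ω p - 1| ≤ 2 * n * (k:ℝ) ^ (-(3/4) : ℝ)
    rw [hx k ω]
    simp only [Pi.smul_apply, smul_eq_mul]
    exact main (fun j => (k:ℝ)⁻¹ * ∑ i ∈ Finset.Icc 1 k, ξ i ω j) hνb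
end

section
/- Let β ∈ (1/2, 1) and c > 0. For any ρ > 1 there exists C < ∞ such that for all t ∈ ℕ, Σ_{k=1}^t k^{−ρβ} exp(−c(t^{1−β} − k^{1−β})) ≤ C (log t) / t^{(ρ−1)β}. -/
set_option maxHeartbeats 1000000

/-- Concavity estimate: for `0 < β < 1` and `0 < x ≤ y`,
`(1-β) y^(-β) (y-x) ≤ y^(1-β) - x^(1-β)`. -/
lemma aux_concave_rpow {β x y : ℝ} (hβ0 : 0 < β) (hβ1 : β < 1) (hx : 0 < x) (hxy : x ≤ y) :
    (1 - β) * y ^ (-β) * (y - x) ≤ y ^ (1 - β) - x ^ (1 - β) := by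
  have hy : 0 < y := hx.trans_le hxy
  have hu0 : (0:ℝ) ≤ x / y := by positivity
  have key := Real.geom_mean_le_arith_mean2_weighted
    (by linarith : (0:ℝ) ≤ 1 - β) hβ0.le hu0 zero_le_one (by ring)
  rw [Real.one_rpow, mul_one, mul_one] at key
  have hyp : (0:ℝ) < y ^ (1 - β) := Real.rpow_pos_of_pos hy _
  have hdiv : (x / y) ^ (1 - β) = x ^ (1-β) / y ^ (1-β) := Real.div_rpow hx.le hy.le _
  have h2 : x ^ (1-β) ≤ ((1-β)*(x/y) + β) * y^(1-β) := by
    calc x^(1-β) = (x/y)^(1-β) * y^(1-β) := by rw [hdiv]; field_simp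
    _ ≤ _ := mul_le_mul_of_nonneg_right key hyp.le
  have h3 : (x/y) * y^(1-β) = x * y^(-β) := by
    rw [show (-β) = 1 - β - 1 by ring, Real.rpow_sub hy, Real.rpow_one]
    field_simp
    rw [← Real.rpow_add hy, show β + (1 - β - 1) = 0 by ring]
    simp
  have h4 : y^(-β) * y = y^(1-β) := by
    rw [show (1-β) = -β + 1 by ring, Real.rpow_add_one hy.ne']
  have h2' : x^(1-β) ≤ (1-β)*(x*y^(-β)) + β*y^(1-β) := by
    calc x^(1-β) ≤ ((1-β)*(x/y)+β)*y^(1-β) := h2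
    _ = (1-β)*((x/y)*y^(1-β)) + β*y^(1-β) := by ring
    _ = _ := by rw [h3]
  nlinarith [h2', h4]

/-- Tail geometric sum bound. -/
lemma aux_geom_tail (r : ℝ) (hr0 : 0 ≤ r) (hr1 : r < 1) (m t : ℕ) :
    ∑ k ∈ Finset.Ioc m t, r ^ (t - k) ≤ 1 / (1 - r) := by
  have h1r : (0:ℝ) < 1 - r := by linarith
  have himg : ∑ j ∈ (Finset.Ioc m t).image (fun k => t - k), r ^ j
      = ∑ k ∈ Finset.Ioc m t, r ^ (t - k) :=
    Finset.sum_image (fun a ha b hb hab => by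
      simp only [Finset.mem_coe, Finset.mem_Ioc] at ha hb; omega)
  calc ∑ k ∈ Finset.Ioc m t, r ^ (t - k)
      ≤ ∑ j ∈ Finset.range t, r ^ j := by
        rw [← himg]
        apply Finset.sum_le_sum_of_subset_of_nonneg
        · intro j hj
          simp only [Finset.mem_image, Finset.mem_Ioc] at hj
          obtain ⟨k, ⟨hk1, hk2⟩, rfl⟩ := hj
          simp only [Finset.mem_range]
          omega
        · intro i _ _; positivity
    _ ≤ 1 / (1 - r) := by
        rw [geom_sum_eq (by linarith : r ≠ 1)]
        have heq : (r ^ t - 1)/(r - 1) = (1 - r ^ t)/(1 - r) := by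
          rw [← neg_div_neg_eq]; ring_nf
        rw [heq]
        exact (div_le_div_iff_of_pos_right h1r).mpr (by nlinarith [pow_nonneg hr0 t])

/-- For `β ∈ (1/2, 1)`, `c > 0`, `ρ > 1`, there exists `C < ∞` with
`∑_{k=1}^t k^{−ρβ} exp(−c(t^{1−β} − k^{1−β})) ≤ C log t / t^{(ρ−1)β}` for all `t ≥ 2`. -/
theorem stmt_18 (β c ρ : ℝ) (hβ₁ : 1/2 < β) (hβ₂ : β < 1) (hc : 0 < c) (hρ : 1 < ρ) :
    ∃ C : ℝ, 0 < C ∧ ∀ t : ℕ, 2 ≤ t →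
      ∑ k ∈ Finset.Icc 1 t,
          (k : ℝ) ^ (-(ρ * β)) * Real.exp (-c * ((t : ℝ) ^ (1 - β) - (k : ℝ) ^ (1 - β)))
        ≤ C * Real.log t / (t : ℝ) ^ ((ρ - 1) * β) := by
  have hβ0 : 0 < β := by linarith
  have h1β : (0:ℝ) < 1 - β := by linarith
  have hc1 : 0 < c * (1 - β) := by positivity
  set a := (ρ - 1) * β with ha_def
  have ha0 : 0 ≤ a := mul_nonneg (by linarith) (by linarith)
  set c2 : ℝ := c * (1 - β) / 2 with hc2_def
  have hc2 : 0 < c2 := by positivity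
  set n : ℕ := ⌈(1 + a) / (1 - β)⌉₊ with hn_def
  have hn : 1 + a ≤ (n : ℝ) * (1 - β) := by
    have := Nat.le_ceil ((1 + a) / (1 - β))
    rw [div_le_iff₀ h1β] at this
    exact this
  set CA : ℝ := (n.factorial : ℝ) / c2 ^ n with hCA_def
  have hCA : 0 < CA := by positivity
  set CB : ℝ := 2 ^ (ρ * β) * Real.exp (c * (1 - β)) / (c * (1 - β)) with hCB_def
  have hCB : 0 < CB := by positivity
  have hlog2 : 0 < Real.log 2 := Real.log_pos (by norm_num)
  refine ⟨(CA + CB) / Real.log 2, by positivity, fun t ht => ?_⟩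
  have ht0 : (0:ℝ) < t := by positivity
  have ht1 : (1:ℝ) ≤ t := by exact_mod_cast Nat.one_le_of_lt ht
  have hta : (0:ℝ) < (t:ℝ) ^ a := Real.rpow_pos_of_pos ht0 _
  set τ : ℝ := (t:ℝ) ^ (1 - β) with hτ_def
  have hτ1 : (1:ℝ) ≤ τ := Real.one_le_rpow ht1 h1β.le
  have hτ0 : 0 < τ := by linarith
  set L : ℝ := c * (1 - β) * (t:ℝ) ^ (-β) with hL_def
  have htβ : (0:ℝ) < (t:ℝ) ^ (-β) := Real.rpow_pos_of_pos ht0 _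
  have hL0 : 0 < L := by positivity
  have hLc : L ≤ c * (1 - β) := by
    have : (t:ℝ) ^ (-β) ≤ 1 :=
      Real.rpow_le_one_of_one_le_of_nonpos ht1 (by linarith)
    calc L = c * (1 - β) * (t:ℝ) ^ (-β) := rfl
    _ ≤ c * (1 - β) * 1 := by
        exact mul_le_mul_of_nonneg_left this hc1.le
    _ = c * (1 - β) := mul_one _
  set r : ℝ := Real.exp (-L) with hr_def
  have hr0 : 0 < r := Real.exp_pos _
  have hr1 : r < 1 := Real.exp_lt_one_iff.mpr (by linarith)
  have hτt : (t:ℝ) ^ (-β) * (t:ℝ) = τ := by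
    rw [hτ_def, show (1-β) = -β + 1 by ring, Real.rpow_add_one ht0.ne']
  -- per-term exponential bound
  have hterm : ∀ k ∈ Finset.Icc 1 t,
      Real.exp (-c * ((t:ℝ)^(1-β) - (k:ℝ)^(1-β))) ≤ r ^ (t - k) := by
    intro k hk
    simp only [Finset.mem_Icc] at hk
    obtain ⟨hk1, hk2⟩ := hk
    have hk0 : (0:ℝ) < k := by exact_mod_cast hk1
    have hkt : (k:ℝ) ≤ t := by exact_mod_cast hk2
    have hcast : ((t - k : ℕ) : ℝ) = (t:ℝ) - k := by
      rw [Nat.cast_sub hk2]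
    rw [hr_def, ← Real.exp_nat_mul]
    apply Real.exp_le_exp.mpr
    have hcon := aux_concave_rpow hβ0 hβ₂ hk0 hkt
    have h5 := mul_le_mul_of_nonneg_left hcon hc.le
    rw [hcast, hL_def]
    linarith [h5]
  set m : ℕ := t / 2 with hm_def
  have hmt : m ≤ t := Nat.div_le_self t 2
  -- Part A: k ∈ Ioc 0 m
  set E : ℝ := Real.exp (-(c2 * τ)) with hE_def
  have hpartA : ∀ k ∈ Finset.Ioc 0 m,
      (k : ℝ) ^ (-(ρ * β)) * Real.exp (-c * ((t:ℝ)^(1-β) - (k:ℝ)^(1-β))) ≤ E := by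
    intro k hk
    simp only [Finset.mem_Ioc] at hk
    obtain ⟨hk1, hk2⟩ := hk
    have hk1' : 1 ≤ k := hk1
    have hk2' : k ≤ t := le_trans hk2 hmt
    have hkr : (1:ℝ) ≤ k := by exact_mod_cast hk1'
    have hone : (k : ℝ) ^ (-(ρ * β)) ≤ 1 :=
      Real.rpow_le_one_of_one_le_of_nonpos hkr (by nlinarith)
    have h6 : Real.exp (-c * ((t:ℝ)^(1-β) - (k:ℝ)^(1-β))) ≤ r ^ (t - k) :=
      hterm k (Finset.mem_Icc.mpr ⟨hk1', hk2'⟩)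
    have h7 : r ^ (t - k) ≤ E := by
      rw [hr_def, ← Real.exp_nat_mul, hE_def]
      apply Real.exp_le_exp.mpr
      have hhalf : (t:ℝ) ≤ 2 * ((t - k : ℕ) : ℝ) := by
        have : t ≤ 2 * (t - k) := by omega
        exact_mod_cast this
      have h8 : c2 * τ ≤ ((t - k : ℕ) : ℝ) * L := by
        rw [← hτt, hc2_def, hL_def]
        have h := mul_le_mul_of_nonneg_left hhalf
          (by positivity : (0:ℝ) ≤ c * (1 - β) * (t:ℝ) ^ (-β) / 2)
        nlinarith [h]
      linarith
    calc (k : ℝ) ^ (-(ρ * β)) * Real.exp (-c * ((t:ℝ)^(1-β) - (k:ℝ)^(1-β)))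
        ≤ 1 * (r ^ (t - k)) := by
          apply mul_le_mul hone h6 (Real.exp_pos _).le zero_le_one
      _ = r ^ (t - k) := one_mul _
      _ ≤ E := h7
  have hsumA : ∑ k ∈ Finset.Ioc 0 m,
      (k : ℝ) ^ (-(ρ * β)) * Real.exp (-c * ((t:ℝ)^(1-β) - (k:ℝ)^(1-β)))
      ≤ CA * (t:ℝ) ^ (-a) := by
    have hE0 : 0 < E := Real.exp_pos _
    calc ∑ k ∈ Finset.Ioc 0 m,
        (k : ℝ) ^ (-(ρ * β)) * Real.exp (-c * ((t:ℝ)^(1-β) - (k:ℝ)^(1-β)))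
        ≤ (Finset.Ioc 0 m).card • E := Finset.sum_le_card_nsmul _ _ _ hpartA
      _ = (m : ℝ) * E := by rw [Nat.card_Ioc]; simp [nsmul_eq_mul]
      _ ≤ (t : ℝ) * E := by
          apply mul_le_mul_of_nonneg_right _ hE0.le
          exact_mod_cast hmt
      _ ≤ CA * (t:ℝ) ^ (-a) := by
          -- reduce to t * t^a ≤ CA * exp (c2 * τ)
          have h1 : (t:ℝ) * (t:ℝ)^a ≤ CA * Real.exp (c2 * τ) := by
            have hstep1 : (t:ℝ) * (t:ℝ)^a = (t:ℝ) ^ (1 + a) := by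
              rw [Real.rpow_add ht0, Real.rpow_one]
            have hstep2 : (t:ℝ) ^ (1 + a) ≤ (t:ℝ) ^ ((1 - β) * n) := by
              apply Real.rpow_le_rpow_of_exponent_le ht1
              linarith [hn]
            have hstep3 : (t:ℝ) ^ ((1 - β) * n) = τ ^ n := by
              rw [Real.rpow_mul ht0.le, hτ_def, Real.rpow_natCast]
            have hstep4 : τ ^ n ≤ CA * Real.exp (c2 * τ) := by
              have hp := Real.pow_div_factorial_le_exp (c2 * τ) (by positivity) n
              rw [div_le_iff₀ (by positivity : (0:ℝ) < (n.factorial : ℝ))] at hp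
              rw [mul_pow] at hp
              rw [hCA_def, div_mul_eq_mul_div, le_div_iff₀ (by positivity : (0:ℝ) < c2 ^ n)]
              calc τ ^ n * c2 ^ n = c2 ^ n * τ ^ n := by ring
                _ ≤ Real.exp (c2 * τ) * (n.factorial : ℝ) := hp
                _ = (n.factorial : ℝ) * Real.exp (c2 * τ) := by ring
            calc (t:ℝ) * (t:ℝ)^a = (t:ℝ)^(1+a) := hstep1
              _ ≤ (t:ℝ)^((1-β)*n) := hstep2
              _ = τ ^ n := hstep3
              _ ≤ _ := hstep4
          have h2 := (div_le_div_iff₀ (Real.exp_pos (c2*τ)) hta).mpr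
            (by linarith [h1] : (t:ℝ) * (t:ℝ)^a ≤ CA * Real.exp (c2*τ))
          rw [hE_def, Real.exp_neg, Real.rpow_neg ht0.le]
          rw [div_eq_mul_inv, div_eq_mul_inv] at h2
          exact h2
  -- Part B: k ∈ Ioc m t
  have hsumB : ∑ k ∈ Finset.Ioc m t,
      (k : ℝ) ^ (-(ρ * β)) * Real.exp (-c * ((t:ℝ)^(1-β) - (k:ℝ)^(1-β)))
      ≤ CB * (t:ℝ) ^ (-a) := by
    set D : ℝ := 2 ^ (ρ * β) * (t:ℝ) ^ (-(ρ * β)) with hD_def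
    have hD0 : 0 < D := by positivity
    have hpartB : ∀ k ∈ Finset.Ioc m t,
        (k : ℝ) ^ (-(ρ * β)) * Real.exp (-c * ((t:ℝ)^(1-β) - (k:ℝ)^(1-β)))
        ≤ D * r ^ (t - k) := by
      intro k hk
      simp only [Finset.mem_Ioc] at hk
      obtain ⟨hk1, hk2⟩ := hk
      have hk1' : 1 ≤ k := by omega
      have hkhalf : (t:ℝ) / 2 ≤ (k:ℝ) := by
        have : t ≤ 2 * k := by omega
        have h9 : (t:ℝ) ≤ 2 * k := by exact_mod_cast this
        linarith
      have hkb : (k : ℝ) ^ (-(ρ * β)) ≤ D := by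
        have h10 : (k : ℝ) ^ (-(ρ * β)) ≤ ((t:ℝ)/2) ^ (-(ρ * β)) :=
          Real.rpow_le_rpow_of_nonpos (by positivity) hkhalf (by nlinarith)
        have h11 : ((t:ℝ)/2) ^ (-(ρ * β)) = D := by
          rw [hD_def, Real.div_rpow ht0.le (by norm_num : (0:ℝ) ≤ 2),
            div_eq_mul_inv, ← Real.rpow_neg (by norm_num : (0:ℝ) ≤ 2), neg_neg,
            mul_comm]
        rw [← h11]; exact h10
      exact mul_le_mul hkb (hterm k (Finset.mem_Icc.mpr ⟨hk1', hk2⟩))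
        (Real.exp_pos _).le hD0.le
    have hgeom : ∑ k ∈ Finset.Ioc m t, r ^ (t - k) ≤ 1 / (1 - r) :=
      aux_geom_tail r hr0.le hr1 m t
    have hinv : 1 / (1 - r) ≤ Real.exp (c * (1-β)) / (c * (1-β)) * (t:ℝ)^β := by
      have hexp : L + 1 ≤ Real.exp L := Real.add_one_le_exp L
      have hrL : L * r ≤ 1 - r := by
        have h12 : (L + 1) * r ≤ Real.exp L * r :=
          mul_le_mul_of_nonneg_right hexp hr0.le
        have h13 : Real.exp L * r = 1 := by
          rw [hr_def, ← Real.exp_add]; simp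
        nlinarith
      have hLr0 : 0 < L * r := by positivity
      have h14 : 1 / (1 - r) ≤ 1 / (L * r) :=
        one_div_le_one_div_of_le hLr0 hrL
      have h15 : 1 / (L * r) = Real.exp L / L := by
        rw [hr_def, Real.exp_neg]
        field_simp
      have h16 : Real.exp L / L ≤ Real.exp (c*(1-β)) / L :=
        div_le_div_of_nonneg_right (Real.exp_le_exp.mpr hLc) hL0.le |>.trans_eq rfl
      have h17 : Real.exp (c*(1-β)) / L = Real.exp (c*(1-β)) / (c*(1-β)) * (t:ℝ)^β := by
        rw [hL_def, Real.rpow_neg ht0.le]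
        field_simp
      calc 1 / (1 - r) ≤ 1 / (L * r) := h14
        _ = Real.exp L / L := h15
        _ ≤ Real.exp (c*(1-β)) / L := h16
        _ = _ := h17
    have hrpow : (t:ℝ) ^ (-(ρ*β)) * (t:ℝ)^β = (t:ℝ)^(-a) := by
      rw [← Real.rpow_add ht0]
      congr 1
      rw [ha_def]; ring
    calc ∑ k ∈ Finset.Ioc m t,
        (k : ℝ) ^ (-(ρ * β)) * Real.exp (-c * ((t:ℝ)^(1-β) - (k:ℝ)^(1-β)))
        ≤ ∑ k ∈ Finset.Ioc m t, D * r ^ (t - k) := Finset.sum_le_sum hpartB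
      _ = D * ∑ k ∈ Finset.Ioc m t, r ^ (t - k) := by rw [Finset.mul_sum]
      _ ≤ D * (1 / (1 - r)) := by
          apply mul_le_mul_of_nonneg_left hgeom hD0.le
      _ ≤ D * (Real.exp (c*(1-β)) / (c*(1-β)) * (t:ℝ)^β) :=
          mul_le_mul_of_nonneg_left hinv hD0.le
      _ = CB * (t:ℝ)^(-a) := by
          rw [hD_def, hCB_def, ← hrpow]; ring
  -- combine
  have hsplit : ∑ k ∈ Finset.Icc 1 t,
      (k : ℝ) ^ (-(ρ * β)) * Real.exp (-c * ((t:ℝ)^(1-β) - (k:ℝ)^(1-β)))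
      = (∑ k ∈ Finset.Ioc 0 m,
          (k : ℝ) ^ (-(ρ * β)) * Real.exp (-c * ((t:ℝ)^(1-β) - (k:ℝ)^(1-β))))
        + ∑ k ∈ Finset.Ioc m t,
          (k : ℝ) ^ (-(ρ * β)) * Real.exp (-c * ((t:ℝ)^(1-β) - (k:ℝ)^(1-β))) := by
    rw [show Finset.Icc 1 t = Finset.Ioc 0 t from by
      rw [← Finset.Icc_add_one_left_eq_Ioc]; rfl]
    exact (Finset.sum_Ioc_consecutive _ (Nat.zero_le m) hmt).symm
  rw [hsplit]
  have hmain : (CA + CB) * (t:ℝ)^(-a) ≤ (CA + CB) / Real.log 2 * Real.log t / (t:ℝ)^a := by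
    have hlogt : Real.log 2 ≤ Real.log t := by
      apply Real.log_le_log (by norm_num)
      exact_mod_cast ht
    have hnum : CA + CB ≤ (CA + CB) / Real.log 2 * Real.log t := by
      rw [div_mul_eq_mul_div, le_div_iff₀ hlog2]
      have := mul_le_mul_of_nonneg_left hlogt (by positivity : (0:ℝ) ≤ CA + CB)
      linarith
    rw [Real.rpow_neg ht0.le, ← div_eq_mul_inv]
    exact div_le_div_of_nonneg_right hnum hta.le |>.trans_eq rfl
  calc _ ≤ CA * (t:ℝ)^(-a) + CB * (t:ℝ)^(-a) := add_le_add hsumA hsumB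
    _ = (CA + CB) * (t:ℝ)^(-a) := by ring
    _ ≤ _ := hmain
end
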